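/- arXiv:1105.0258 — 3 statements merged into one kernel-verified Lean document; each statement's English description precedes it below -/
import Mathlib

section
/- For every n with 5 ≤ n ≤ 7 and points p_1,…,p_n in general position in P^3, the radical ideal I = I(1^{×n}) = ∩_{j=1}^n m_{p_j} satisfies γ(I) ≥ 5/3; in fact α(I(1^{×5})^(3m)) ≥ 5m for all integers m ≥ 1. -/
open MvPolynomial Filter

/-- The homogeneous ideal of all forms vanishing at the (projective) point with
coordinate vector `p`. -/
noncomputable def pointIdeal {k : Type*} [Field k] {σ : Type*} (p : σ → k) :
    Ideal (MvPolynomial σ k) :=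
  Ideal.span { f | (∃ d, f.IsHomogeneous d) ∧ eval p f = 0 }

/-- The fat points ideal `⋂ⱼ m_{pⱼ}^{mⱼ}` (natural multiplicities). -/
noncomputable def fatIdeal {k : Type*} [Field k] {N n : ℕ} (p : Fin n → (Fin (N + 1) → k))
    (m : Fin n → ℕ) : Ideal (MvPolynomial (Fin (N + 1)) k) :=
  ⨅ j, pointIdeal (p j) ^ (m j)

/-- The fat points ideal with integer multiplicities, with the convention
`m_p^m = (1)` for `m ≤ 0`. -/
noncomputable def fatIdealZ {k : Type*} [Field k] {N n : ℕ} (p : Fin n → (Fin (N + 1) → k))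
    (m : Fin n → ℤ) : Ideal (MvPolynomial (Fin (N + 1)) k) :=
  ⨅ j, pointIdeal (p j) ^ (m j).toNat

/-- The irrelevant maximal ideal `M = (x_0, …, x_N)`. -/
noncomputable def maxIdeal (k : Type*) [Field k] (N : ℕ) : Ideal (MvPolynomial (Fin (N + 1)) k) :=
  Ideal.span (Set.range X)

/-- `α(I)`: the least `t ≥ 0` such that `I` contains a nonzero form of degree `t`. -/
noncomputable def alpha {k : Type*} [Field k] {σ : Type*}
    (I : Ideal (MvPolynomial σ k)) : ℕ :=
  sInf { t | ∃ f ∈ I, f ≠ 0 ∧ f.IsHomogeneous t }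

/-- The sequence `t ↦ α(I^{(t)})/t` attached to the fat points ideal with points `p`
and multiplicities `m`; its limit as `t → ∞` is the Waldschmidt constant `γ`. -/
noncomputable def alphaSeq {k : Type*} [Field k] {N n : ℕ}
    (p : Fin n → (Fin (N + 1) → k)) (m : Fin n → ℕ) (t : ℕ) : ℝ :=
  (alpha (fatIdeal p fun j => t * m j) : ℝ) / t

/-- `P` holds for `n`-tuples of points of `P^N` in general position: there is a
nonempty Zariski-open subset (the complement of the zero locus of a set `S` of
polynomials in the coordinates of the tuple) of tuples of nonzero coordinate
vectors on which `P` holds. -/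
def Generic (k : Type*) [Field k] (N n : ℕ)
    (P : (Fin n → (Fin (N + 1) → k)) → Prop) : Prop :=
  ∃ S : Set (MvPolynomial (Fin n × Fin (N + 1)) k),
    (∃ p : Fin n → (Fin (N + 1) → k), (∀ j, p j ≠ 0) ∧
      ∃ f ∈ S, eval (fun q => p q.1 q.2) f ≠ 0) ∧
    ∀ p : Fin n → (Fin (N + 1) → k), (∀ j, p j ≠ 0) →
      (∃ f ∈ S, eval (fun q => p q.1 q.2) f ≠ 0) → P p

namespace Stmt11

open Finset
open scoped Matrix

variable {k : Type*} [Field k]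


/-- standard point `e_j` -/
def stdPt (k : Type*) [Field k] (j : Fin 4) : Fin 4 → k := fun i => if i = j then 1 else 0

/-- weight: sum of all exponents except the `j`-th -/
def wj (j : Fin 4) (a : Fin 4 →₀ ℕ) : ℕ := ∑ i ∈ Finset.univ.erase j, a i

lemma wj_add (j : Fin 4) (a b : Fin 4 →₀ ℕ) : wj j (a + b) = wj j a + wj j b := by
  simp [wj, Finset.sum_add_distrib]

lemma sum_univ_eq_degree (a : Fin 4 →₀ ℕ) : ∑ i, a i = Finsupp.degree a := by
  rw [Finsupp.degree]
  exact (Finset.sum_subset (Finset.subset_univ _)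
    (fun i _ hi => Finsupp.notMem_support_iff.1 hi)).symm

lemma degree_of_mem_support {f : MvPolynomial (Fin 4) k} {d : ℕ} (hf : f.IsHomogeneous d)
    {a : Fin 4 →₀ ℕ} (ha : a ∈ f.support) : ∑ i, a i = d := by
  rw [sum_univ_eq_degree]
  have := hf (MvPolynomial.mem_support_iff.1 ha)
  rw [Finsupp.degree_eq_weight_one]
  exact this

lemma wj_apply_add (j : Fin 4) (a : Fin 4 →₀ ℕ) : wj j a + a j = ∑ i, a i := by
  rw [wj]
  exact Finset.sum_erase_add _ _ (Finset.mem_univ j)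

/-- the ideal of polynomials all of whose monomials have `wj j`-weight at least `s` -/
noncomputable def Vd (k : Type*) [Field k] (j : Fin 4) (s : ℕ) :
    Ideal (MvPolynomial (Fin 4) k) where
  carrier := {f | ∀ a ∈ f.support, s ≤ wj j a}
  zero_mem' := by simp
  add_mem' := by
    intro f g hf hg a ha
    rcases Finset.mem_union.1 (MvPolynomial.support_add ha) with h | h
    · exact hf a h
    · exact hg a h
  smul_mem' := by
    intro c f hf a ha
    rw [smul_eq_mul] at ha
    have := MvPolynomial.support_mul c f ha
    rcases Finset.mem_add.1 this with ⟨b, _, b', hb', rfl⟩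
    have := hf b' hb'
    rw [wj_add]
    omega

lemma mem_Vd {j : Fin 4} {s : ℕ} {f : MvPolynomial (Fin 4) k} :
    f ∈ Vd k j s ↔ ∀ a ∈ f.support, s ≤ wj j a := Iff.rfl

lemma eval_stdPt {f : MvPolynomial (Fin 4) k} {d : ℕ} (hf : f.IsHomogeneous d) (j : Fin 4) :
    eval (stdPt k j) f = coeff (Finsupp.single j d) f := by
  rw [eval_eq']
  rw [Finset.sum_eq_single (Finsupp.single j d)]
  · rw [Finset.prod_eq_one, mul_one]
    intro i _
    rcases eq_or_ne i j with rfl | hne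
    · simp [stdPt]
    · simp [stdPt, hne, Finsupp.single_apply, Ne.symm hne]
  · intro b hb hbne
    have : ∃ i, i ≠ j ∧ b i ≠ 0 := by
      by_contra hco
      push_neg at hco
      apply hbne
      have hbj : b j = d := by
        have hd := degree_of_mem_support hf hb
        have := wj_apply_add j b
        have hw : wj j b = 0 := by
          rw [wj]
          apply Finset.sum_eq_zero
          intro i hi
          exact hco i (Finset.mem_erase.1 hi).1
        omega
      ext i
      rcases eq_or_ne i j with rfl | hne
      · simp [hbj]
      · simp [hco i hne, Finsupp.single_apply, Ne.symm hne]
    rcases this with ⟨i, hij, hbi⟩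
    rw [Finset.prod_eq_zero (Finset.mem_univ i), mul_zero]
    simp [stdPt, hij, zero_pow hbi]
  · intro h
    rw [MvPolynomial.notMem_support_iff.1 h, zero_mul]

lemma pointIdeal_le_Vd (j : Fin 4) : pointIdeal (stdPt k j) ≤ Vd k j 1 := by
  rw [pointIdeal, Ideal.span_le]
  rintro f ⟨⟨d, hfd⟩, hfe⟩
  intro a ha
  by_contra h
  have hw : wj j a = 0 := by omega
  have hall : ∀ i, i ≠ j → a i = 0 := by
    intro i hi
    have := Finset.sum_eq_zero_iff.1 hw i (Finset.mem_erase.2 ⟨hi, Finset.mem_univ i⟩)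
    exact this
  have haj : a = Finsupp.single j d := by
    have hd := degree_of_mem_support hfd ha
    have hwa := wj_apply_add j a
    ext i
    rcases eq_or_ne i j with rfl | hne
    · simp; omega
    · simp [hall i hne, Finsupp.single_apply, Ne.symm hne]
  rw [eval_stdPt hfd] at hfe
  rw [haj] at ha
  exact (MvPolynomial.mem_support_iff.1 ha) hfe

lemma mul_le_Vd {j : Fin 4} {s t : ℕ} {I J : Ideal (MvPolynomial (Fin 4) k)}
    (hI : I ≤ Vd k j s) (hJ : J ≤ Vd k j t) : I * J ≤ Vd k j (s + t) := by
  rw [Ideal.mul_le]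
  intro f hf g hg a ha
  rcases Finset.mem_add.1 (MvPolynomial.support_mul f g ha) with ⟨b, hb, b', hb', rfl⟩
  have h1 := hI hf b hb
  have h2 := hJ hg b' hb'
  rw [wj_add]
  omega

lemma pow_le_Vd (j : Fin 4) (s : ℕ) : (pointIdeal (stdPt k j)) ^ s ≤ Vd k j s := by
  induction s with
  | zero => intro f _ a _; exact Nat.zero_le _
  | succ n ih =>
    rw [pow_succ]
    exact mul_le_Vd ih (pointIdeal_le_Vd j)

/-- mapping powers of point ideals through a substitution -/
lemma map_pointIdeal_pow (χ : MvPolynomial (Fin 4) k →ₐ[k] MvPolynomial (Fin 4) k)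
    (x y : Fin 4 → k)
    (hgen : ∀ g : MvPolynomial (Fin 4) k, (∃ dg, g.IsHomogeneous dg) → eval y g = 0 →
      (∃ d', (χ g).IsHomogeneous d') ∧ eval x (χ g) = 0)
    {s : ℕ} {f : MvPolynomial (Fin 4) k} (hf : f ∈ pointIdeal y ^ s) :
    χ f ∈ pointIdeal x ^ s := by
  have h1 : Ideal.map χ (pointIdeal y) ≤ pointIdeal x := by
    rw [pointIdeal, Ideal.map_span, Ideal.span_le]
    rintro _ ⟨g, ⟨hg1, hg2⟩, rfl⟩
    exact Ideal.subset_span ⟨(hgen g hg1 hg2).1, (hgen g hg1 hg2).2⟩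
  have h2 : χ f ∈ Ideal.map χ (pointIdeal y ^ s) := Ideal.mem_map_of_mem _ hf
  rw [Ideal.map_pow] at h2
  exact Ideal.pow_right_mono h1 s h2

/-- substitution by a matrix of linear forms -/
noncomputable def lin (B : Matrix (Fin 4) (Fin 4) k) :
    MvPolynomial (Fin 4) k →ₐ[k] MvPolynomial (Fin 4) k :=
  aeval (fun i => ∑ j, C (B i j) * X j)

lemma lin_isHomogeneous {B : Matrix (Fin 4) (Fin 4) k} {f : MvPolynomial (Fin 4) k} {d : ℕ}
    (hf : f.IsHomogeneous d) : (lin B f).IsHomogeneous d := by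
  have := hf.aeval (fun i => ∑ j, C (B i j) * X j) (n := 1) (fun i => by
    apply MvPolynomial.IsHomogeneous.sum
    intro j _
    exact isHomogeneous_C_mul_X _ _)
  simpa [lin] using this

lemma eval_aeval' (x : Fin 4 → k) (g : Fin 4 → MvPolynomial (Fin 4) k)
    (f : MvPolynomial (Fin 4) k) :
    eval x (aeval g f) = eval (fun i => eval x (g i)) f := by
  have h : eval x (aeval g f) = aeval (R := k) x (bind₁ g f) := rfl
  rw [h, aeval_bind₁]
  rfl

lemma eval_lin (B : Matrix (Fin 4) (Fin 4) k) (x : Fin 4 → k) (f : MvPolynomial (Fin 4) k) :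
    eval x (lin B f) = eval (B.mulVec x) f := by
  rw [lin, eval_aeval']
  have h : (fun i => eval x (∑ j, C (B i j) * X j)) = B.mulVec x := by
    funext i
    simp [Matrix.mulVec, dotProduct]
  rw [h]

lemma lin_lin (A B : Matrix (Fin 4) (Fin 4) k) (f : MvPolynomial (Fin 4) k) :
    lin A (lin B f) = lin (B * A) f := by
  have h : (lin A).comp (lin B) = lin (B * A) := by
    apply MvPolynomial.algHom_ext
    intro i
    simp only [AlgHom.comp_apply, lin, aeval_X, map_sum, map_mul, aeval_C]
    simp only [MvPolynomial.algebraMap_eq, Finset.mul_sum, Matrix.mul_apply]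
    rw [Finset.sum_comm]
    apply Finset.sum_congr rfl
    intro j _
    rw [show (C (∑ l, B i l * A l j) : MvPolynomial (Fin 4) k) = ∑ l, C (B i l * A l j) from
      map_sum C _ _, Finset.sum_mul]
    apply Finset.sum_congr rfl
    intro l _
    rw [C_mul]
    ring
  calc lin A (lin B f) = ((lin A).comp (lin B)) f := rfl
  _ = lin (B * A) f := by rw [h]

lemma lin_one (f : MvPolynomial (Fin 4) k) : lin (1 : Matrix (Fin 4) (Fin 4) k) f = f := by
  have h : lin (1 : Matrix (Fin 4) (Fin 4) k) = AlgHom.id k _ := by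
    apply MvPolynomial.algHom_ext
    intro i
    simp only [lin, aeval_X, AlgHom.id_apply, Matrix.one_apply]
    rw [Finset.sum_eq_single i] <;> simp +contextual [eq_comm]
  rw [h]; rfl

lemma lin_injective {A B : Matrix (Fin 4) (Fin 4) k} (h : A * B = 1) :
    Function.Injective (lin (k := k) A) := by
  intro f g hfg
  have := congrArg (lin B) hfg
  rwa [lin_lin, lin_lin, h, lin_one, lin_one] at this

/-- evaluation of homogeneous polynomials at scalar multiples -/
lemma eval_smul_of_homog {g : MvPolynomial (Fin 4) k} {d : ℕ} (hg : g.IsHomogeneous d)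
    (c : k) (x : Fin 4 → k) : eval (fun i => c * x i) g = c ^ d * eval x g := by
  rw [eval_eq', eval_eq', Finset.mul_sum]
  apply Finset.sum_congr rfl
  intro b hb
  have hd : ∑ i, b i = d := degree_of_mem_support hg hb
  calc coeff b g * ∏ i, (c * x i) ^ b i
      = coeff b g * ((∏ i, c ^ b i) * ∏ i, x i ^ b i) := by
        rw [← Finset.prod_mul_distrib]
        simp_rw [mul_pow]
  _ = c ^ d * (coeff b g * ∏ i, x i ^ b i) := by
        rw [Finset.prod_pow_eq_pow_sum, hd]
        ring



/-- the standard cubo-cubic Cremona transformation of `P^3` -/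
noncomputable def crem : MvPolynomial (Fin 4) k →ₐ[k] MvPolynomial (Fin 4) k :=
  aeval (fun i => ∏ j ∈ Finset.univ.erase i, X j)

/-- mirror exponent vector -/
noncomputable def tau (a : Fin 4 →₀ ℕ) : Fin 4 →₀ ℕ :=
  Finsupp.equivFunOnFinite.symm (fun j => (∑ i, a i) - a j)

lemma tau_apply (a : Fin 4 →₀ ℕ) (j : Fin 4) : tau a j = (∑ i, a i) - a j := rfl

lemma crem_monomial (a : Fin 4 →₀ ℕ) (c : k) :
    crem (monomial a c) = monomial (tau a) c := by
  rw [crem, aeval_monomial, monomial_eq]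
  have halg : algebraMap k (MvPolynomial (Fin 4) k) c = C c := rfl
  rw [halg]
  congr 1
  rw [Finsupp.prod_fintype _ _ (fun i => pow_zero _),
      Finsupp.prod_fintype _ _ (fun i => pow_zero _)]
  have h1 : ∀ i : Fin 4, (∏ j ∈ Finset.univ.erase i, (X j : MvPolynomial (Fin 4) k)) ^ a i
      = ∏ j ∈ Finset.univ.erase i, (X j : MvPolynomial (Fin 4) k) ^ a i := fun i =>
    (Finset.prod_pow _ _ _).symm
  simp_rw [h1]
  rw [Finset.prod_comm' (t' := Finset.univ) (s' := fun j => Finset.univ.erase j)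
    (by intro i j; simp [Finset.mem_erase]; tauto)]
  apply Finset.prod_congr rfl
  intro j _
  rw [Finset.prod_pow_eq_pow_sum]
  congr 1
  rw [tau_apply]
  have h2 := Finset.sum_erase_add Finset.univ (fun i => a i) (Finset.mem_univ j)
  omega

lemma main_std {q : Fin 4 → k} (hq : ∀ i, q i ≠ 0) {s d : ℕ}
    {f : MvPolynomial (Fin 4) k} (hf0 : f ≠ 0) (hfh : f.IsHomogeneous d)
    (hfe : ∀ j : Fin 4, f ∈ (pointIdeal (stdPt k j)) ^ s)
    (hfq : f ∈ (pointIdeal q) ^ s) : 5 * s ≤ 3 * d := by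
  classical
  have habove : ∀ a ∈ f.support, ∀ j : Fin 4, s + a j ≤ d := by
    intro a ha j
    have h1 : s ≤ wj j a := pow_le_Vd j s (hfe j) a ha
    have h2 : wj j a + a j = ∑ i, a i := wj_apply_add j a
    have h3 : ∑ i, a i = d := degree_of_mem_support hfh ha
    omega
  obtain ⟨a₀, ha₀⟩ := MvPolynomial.support_nonempty.2 hf0
  have hsd : s ≤ d := by have := habove a₀ ha₀ 0; omega
  set e := d - s with he
  have h4s : 4 * s ≤ 3 * d := by
    have h1 := degree_of_mem_support hfh ha₀
    have h2 : ∀ j, a₀ j ≤ e := fun j => by have := habove a₀ ha₀ j; omega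
    have h5 : ∑ i : Fin 4, a₀ i ≤ ∑ _i : Fin 4, e := Finset.sum_le_sum (fun i _ => h2 i)
    simp [Finset.sum_const] at h5
    omega
  -- the quotient polynomial G
  set mir : (Fin 4 →₀ ℕ) → (Fin 4 →₀ ℕ) :=
    fun a => Finsupp.equivFunOnFinite.symm (fun j => e - a j) with hmir
  have hmir_apply : ∀ (a : Fin 4 →₀ ℕ) (j : Fin 4), mir a j = e - a j := fun a j => rfl
  set G : MvPolynomial (Fin 4) k := ∑ a ∈ f.support, monomial (mir a) (coeff a f) with hG
  have hainj : ∀ a ∈ f.support, ∀ b ∈ f.support, mir a = mir b → a = b := by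
    intro a ha b hb hab
    ext j
    have h1 := habove a ha j
    have h2 := habove b hb j
    have h3 : mir a j = mir b j := by rw [hab]
    rw [hmir_apply, hmir_apply] at h3
    omega
  have hcoeffG : ∀ a ∈ f.support, coeff (mir a) G = coeff a f := by
    intro a ha
    rw [hG, MvPolynomial.coeff_sum, Finset.sum_eq_single a]
    · rw [coeff_monomial, if_pos rfl]
    · intro b hb hba
      rw [coeff_monomial, if_neg (fun hc => hba (hainj b hb a ha hc))]
    · intro h; exact absurd ha h
  have hG0 : G ≠ 0 := by
    intro h
    exact (MvPolynomial.mem_support_iff.1 ha₀) (by rw [← hcoeffG a₀ ha₀, h, coeff_zero])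
  set d' := 3 * d - 4 * s with hd'
  have hmirdeg : ∀ a ∈ f.support, Finsupp.degree (mir a) = d' := by
    intro a ha
    rw [← sum_univ_eq_degree]
    have h2 : ∀ j, a j ≤ e := fun j => by have := habove a ha j; omega
    have h3 : (∑ i, mir a i) + ∑ i, a i = ∑ _i : Fin 4, e := by
      rw [← Finset.sum_add_distrib]
      apply Finset.sum_congr rfl
      intro i _
      rw [hmir_apply]
      have := h2 i
      omega
    have h4 : ∑ i, a i = d := degree_of_mem_support hfh ha
    simp [Finset.sum_const] at h3
    omega
  have hGh : G.IsHomogeneous d' :=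
    MvPolynomial.IsHomogeneous.sum _ _ _ (fun a ha => isHomogeneous_monomial _ (hmirdeg a ha))
  set sv : Fin 4 →₀ ℕ := Finsupp.equivFunOnFinite.symm (fun _ : Fin 4 => s) with hsv
  have hsv_apply : ∀ j : Fin 4, sv j = s := fun _ => rfl
  have hcremf : crem f = monomial sv (1 : k) * G := by
    conv_lhs => rw [f.as_sum, map_sum]
    rw [hG, Finset.mul_sum]
    apply Finset.sum_congr rfl
    intro a ha
    have h3 := degree_of_mem_support hfh ha
    have hidx : tau a = sv + mir a := by
      ext j
      rw [Finsupp.add_apply, tau_apply, hsv_apply, hmir_apply]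
      have h1 := habove a ha j
      omega
    rw [crem_monomial, monomial_mul, one_mul, hidx]
  set qi : Fin 4 → k := fun i => (q i)⁻¹ with hqi
  have hqi0 : ∀ i, qi i ≠ 0 := fun i => inv_ne_zero (hq i)
  have hcrem_mem : crem f ∈ pointIdeal qi ^ s := by
    apply map_pointIdeal_pow crem qi q _ hfq
    rintro g ⟨dg, hgh⟩ hge
    refine ⟨⟨3 * dg, ?_⟩, ?_⟩
    · have hhom : ∀ i : Fin 4, (∏ j ∈ Finset.univ.erase i, (X j : MvPolynomial (Fin 4) k)).IsHomogeneous 3 := by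
        intro i
        have hcard : ∑ _j ∈ Finset.univ.erase i, 1 = 3 := by simp
        have := MvPolynomial.IsHomogeneous.prod (Finset.univ.erase i)
          (fun j => (X j : MvPolynomial (Fin 4) k)) (fun _ => 1)
          (fun j _ => isHomogeneous_X k j)
        rwa [hcard] at this
      exact hgh.aeval _ hhom
    · rw [crem, eval_aeval']
      have hpt : (fun i => eval qi (∏ j ∈ Finset.univ.erase i, X j))
          = fun i => (∏ j, qi j) * q i := by
        funext i
        rw [map_prod]
        simp only [eval_X]
        have hpe := Finset.prod_erase_mul Finset.univ qi (Finset.mem_univ i)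
        have hqq : qi i * q i = 1 := inv_mul_cancel₀ (hq i)
        calc ∏ j ∈ Finset.univ.erase i, qi j
            = (∏ j ∈ Finset.univ.erase i, qi j) * (qi i * q i) := by rw [hqq, mul_one]
          _ = ((∏ j ∈ Finset.univ.erase i, qi j) * qi i) * q i := by ring
          _ = (∏ j, qi j) * q i := by rw [hpe]
      rw [hpt, eval_smul_of_homog hgh, hge, mul_zero]
  -- move qi to the coordinate point e₀
  set B : Matrix (Fin 4) (Fin 4) k :=
    Matrix.of (fun r c => if c = 0 then qi r else if r = c then 1 else 0) with hB
  set B' : Matrix (Fin 4) (Fin 4) k :=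
    Matrix.of (fun r c => if r = 0 then (if c = 0 then (qi 0)⁻¹ else 0)
      else if r = c then 1 else if c = 0 then -(qi r) * (qi 0)⁻¹ else 0) with hB'
  have hBB' : B * B' = 1 := by
    ext r c
    rw [Matrix.mul_apply, Fin.sum_univ_four]
    fin_cases r <;> fin_cases c <;>
      simp [hB, hB', Matrix.one_apply] <;>
      field_simp <;>
      exact div_self (hqi0 _)
  have hBe0 : B.mulVec (stdPt k 0) = qi := by
    funext r
    simp [Matrix.mulVec, dotProduct, Fin.sum_univ_four, hB, stdPt]
  have hH : lin B (crem f) ∈ pointIdeal (stdPt k 0) ^ s := by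
    apply map_pointIdeal_pow (lin B) (stdPt k 0) qi _ hcrem_mem
    rintro g ⟨dg, hgh⟩ hge
    exact ⟨⟨dg, lin_isHomogeneous hgh⟩, by rw [eval_lin, hBe0, hge]⟩
  set u : MvPolynomial (Fin 4) k := lin B (monomial sv 1) with hu_def
  set h : MvPolynomial (Fin 4) k := lin B G with hh_def
  have hHuh : lin B (crem f) = u * h := by rw [hcremf, map_mul]
  have hsvdeg : Finsupp.degree sv = 4 * s := by
    rw [← sum_univ_eq_degree]
    simp [hsv_apply, Finset.sum_const]
  have hu : u.IsHomogeneous (4 * s) := lin_isHomogeneous (isHomogeneous_monomial _ hsvdeg)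
  have hh0 : h ≠ 0 := fun hz => hG0 (lin_injective hBB' (by rw [map_zero, ← hh_def, hz]))
  have hhh : h.IsHomogeneous d' := lin_isHomogeneous hGh
  have hu0 : coeff (Finsupp.single (0 : Fin 4) (4 * s)) u ≠ 0 := by
    rw [← eval_stdPt hu 0, hu_def, eval_lin, hBe0, eval_monomial,
      Finsupp.prod_fintype _ _ (fun i => pow_zero _), one_mul]
    exact Finset.prod_ne_zero_iff.2 (fun i _ => pow_ne_zero _ (hqi0 i))
  have hHV : ∀ a ∈ (u * h).support, s ≤ wj 0 a := by
    have h1 := pow_le_Vd (k := k) 0 s hH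
    rw [hHuh] at h1
    exact fun a ha => h1 a ha
  have hwsingle : wj 0 (Finsupp.single (0 : Fin 4) (4 * s)) = 0 := by
    rw [wj]
    apply Finset.sum_eq_zero
    intro i hi
    rw [Finsupp.single_apply, if_neg (fun hcc => (Finset.mem_erase.1 hi).1 hcc.symm)]
  have hmain : ∀ b ∈ h.support, s ≤ wj 0 b := by
    by_contra hcon
    push_neg at hcon
    obtain ⟨b1, hb1, hlt⟩ := hcon
    obtain ⟨b, hb, hbmin⟩ := Finset.exists_min_image h.support (wj 0) ⟨b1, hb1⟩
    have hbs : wj 0 b < s := lt_of_le_of_lt (hbmin b1 hb1) hlt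
    set T := Finsupp.single (0 : Fin 4) (4 * s) + b with hT
    have hcT : coeff T (u * h) = coeff (Finsupp.single (0 : Fin 4) (4 * s)) u * coeff b h := by
      rw [MvPolynomial.coeff_mul]
      apply Finset.sum_eq_single_of_mem (Finsupp.single (0 : Fin 4) (4 * s), b)
      · rw [Finset.HasAntidiagonal.mem_antidiagonal]
      · rintro ⟨x, y⟩ hxy hne
        rw [Finset.HasAntidiagonal.mem_antidiagonal] at hxy
        by_contra hz
        have hx : x ∈ u.support := MvPolynomial.mem_support_iff.2 (fun hc => hz (by rw [hc, zero_mul]))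
        have hy : y ∈ h.support := MvPolynomial.mem_support_iff.2 (fun hc => hz (by rw [hc, mul_zero]))
        have hw : wj 0 x + wj 0 y = wj 0 b := by
          rw [← wj_add, hxy, hT, wj_add, hwsingle, zero_add]
        have hymin := hbmin y hy
        have hwx : wj 0 x = 0 := by omega
        have hx0 : x = Finsupp.single (0 : Fin 4) (4 * s) := by
          have hxd : ∑ i, x i = 4 * s := degree_of_mem_support hu hx
          have hxw := wj_apply_add 0 x
          have hall := Finset.sum_eq_zero_iff.1 hwx
          ext i
          rcases eq_or_ne i 0 with rfl | hne0
          · rw [Finsupp.single_apply, if_pos rfl]; omega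
          · rw [Finsupp.single_apply, if_neg (fun hcc => hne0 hcc.symm)]
            exact hall i (Finset.mem_erase.2 ⟨hne0, Finset.mem_univ i⟩)
        have hy0 : y = b := by
          have h5 : x + y = x + b := by rw [hxy, hT, hx0]
          exact add_left_cancel h5
        exact hne (by rw [hx0, hy0])
    have hTs : T ∈ (u * h).support := MvPolynomial.mem_support_iff.2
      (by rw [hcT]; exact mul_ne_zero hu0 (MvPolynomial.mem_support_iff.1 hb))
    have h1 := hHV T hTs
    have hwT : wj 0 T = wj 0 b := by rw [hT, wj_add, hwsingle, zero_add]
    omega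
  obtain ⟨b₀, hb₀⟩ := MvPolynomial.support_nonempty.2 hh0
  have h1 := hmain b₀ hb₀
  have h2 := wj_apply_add 0 b₀
  have h3 : ∑ i, b₀ i = d' := degree_of_mem_support hhh hb₀
  omega

lemma exists_linear (x : Fin 4 → k) (hx : x ≠ 0) :
    ∃ l : MvPolynomial (Fin 4) k, l ≠ 0 ∧ l.IsHomogeneous 1 ∧ eval x l = 0 := by
  have hex : ∃ i, x i ≠ 0 := by
    by_contra hco
    push_neg at hco
    exact hx (funext fun i => hco i)
  obtain ⟨i0, hi0⟩ := hex
  set i1 : Fin 4 := if i0 = 0 then 1 else 0 with hi1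
  have hne : i1 ≠ i0 := by
    rcases eq_or_ne i0 0 with h | h
    · rw [hi1, if_pos h, h]
      decide
    · rw [hi1, if_neg h]
      exact Ne.symm h
  refine ⟨C (x i1) * X i0 - C (x i0) * X i1, ?_, ?_, ?_⟩
  · intro hz
    have hc := congrArg (coeff (Finsupp.single i1 1)) hz
    have hss : Finsupp.single i0 1 ≠ Finsupp.single i1 1 := by
      intro hcc
      exact hne ((Finsupp.single_left_inj (one_ne_zero)).1 hcc).symm
    rw [coeff_sub, coeff_zero, coeff_C_mul, coeff_C_mul, coeff_X', coeff_X',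
      if_neg hss, if_pos rfl, mul_zero, mul_one, zero_sub, neg_eq_zero] at hc
    exact hi0 hc
  · exact (isHomogeneous_C_mul_X (x i1) i0).sub (isHomogeneous_C_mul_X (x i0) i1)
  · simp only [map_sub, map_mul, eval_C, eval_X]
    ring

lemma good_bound {n : ℕ} (hn : 5 ≤ n) (p : Fin n → (Fin 4 → k)) (hp : ∀ j, p j ≠ 0)
    (A : Matrix (Fin 4) (Fin 4) k)
    (hAdef : ∀ r c : Fin 4, A r c = p (Fin.castLE (by omega : 4 ≤ n) c) r)
    (hA : A.det ≠ 0) (hAu : ∀ i, (A.updateCol i (p ⟨4, by omega⟩)).det ≠ 0)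
    (m : ℕ) (hm : 1 ≤ m) :
    5 * m ≤ sInf {t | ∃ f ∈ fatIdeal p (fun _ => 3 * m), f ≠ 0 ∧ f.IsHomogeneous t} := by
  classical
  choose L hL0 hL1 hLe using fun j => exists_linear (p j) (hp j)
  set g₀ : MvPolynomial (Fin 4) k := ∏ j, (L j) ^ (3 * m) with hg₀
  have hg₀0 : g₀ ≠ 0 := Finset.prod_ne_zero_iff.2 (fun j _ => pow_ne_zero _ (hL0 j))
  have hg₀h : g₀.IsHomogeneous (∑ _j : Fin n, 1 * (3 * m)) :=
    MvPolynomial.IsHomogeneous.prod _ _ _ (fun j _ => (hL1 j).pow _)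
  have hg₀I : g₀ ∈ fatIdeal p (fun _ => 3 * m) := by
    rw [fatIdeal, Ideal.mem_iInf]
    intro j
    have h1 : L j ∈ pointIdeal (p j) := Ideal.subset_span ⟨⟨1, hL1 j⟩, hLe j⟩
    have h2 : (L j) ^ (3 * m) ∈ pointIdeal (p j) ^ (3 * m) := Ideal.pow_mem_pow h1 _
    have h3 : g₀ = (∏ j' ∈ Finset.univ.erase j, (L j') ^ (3 * m)) * (L j) ^ (3 * m) := by
      rw [hg₀, Finset.prod_erase_mul _ _ (Finset.mem_univ j)]
    rw [h3]
    exact Ideal.mul_mem_left _ _ h2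
  have hset : {t | ∃ f ∈ fatIdeal p (fun _ => 3 * m), f ≠ 0 ∧ f.IsHomogeneous t}.Nonempty :=
    ⟨_, g₀, hg₀I, hg₀0, hg₀h⟩
  obtain ⟨f, hfI, hf0, hfh⟩ := Nat.sInf_mem hset
  set q : Fin 4 → k := (A.det)⁻¹ • (Matrix.cramer A (p ⟨4, by omega⟩)) with hqdef
  have hq : ∀ i, q i ≠ 0 := by
    intro i
    rw [hqdef]
    simp only [Pi.smul_apply, smul_eq_mul, Matrix.cramer_apply]
    exact mul_ne_zero (inv_ne_zero hA) (hAu i)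
  have hAq : A.mulVec q = p ⟨4, by omega⟩ := by
    rw [hqdef, Matrix.mulVec_smul, Matrix.mulVec_cramer, smul_smul, inv_mul_cancel₀ hA, one_smul]
  have hAe : ∀ j : Fin 4, A.mulVec (stdPt k j) = p (Fin.castLE (by omega) j) := by
    intro j
    funext r
    have hterm : ∀ c : Fin 4, A r c * stdPt k j c = if c = j then A r c else 0 := by
      intro c
      rcases eq_or_ne c j with rfl | hne
      · simp [stdPt]
      · simp [stdPt, hne]
    simp only [Matrix.mulVec, dotProduct, hterm]
    rw [Finset.sum_ite_eq' Finset.univ j (fun c => A r c), if_pos (Finset.mem_univ j), hAdef]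
  have hmem : ∀ (y x : Fin 4 → k), A.mulVec x = y →
      f ∈ pointIdeal y ^ (3 * m) → lin A f ∈ pointIdeal x ^ (3 * m) := by
    intro y x hxy hf
    apply map_pointIdeal_pow (lin A) x y _ hf
    rintro g ⟨dg, hgh⟩ hge
    exact ⟨⟨dg, lin_isHomogeneous hgh⟩, by rw [eval_lin, hxy, hge]⟩
  have hfat : ∀ j : Fin n, f ∈ pointIdeal (p j) ^ (3 * m) := by
    rw [fatIdeal, Ideal.mem_iInf] at hfI
    exact hfI
  have hAA : A * A⁻¹ = 1 := Matrix.mul_nonsing_inv A (isUnit_iff_ne_zero.2 hA)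
  have hlinf0 : lin A f ≠ 0 := fun hz => hf0 (lin_injective hAA (by rw [hz, map_zero]))
  have h5 := main_std hq hlinf0 (lin_isHomogeneous hfh)
    (fun j => hmem _ _ (hAe j) (hfat _)) (hmem _ _ hAq (hfat _))
  omega

/-- the genericity polynomial: the five 4×4 minors of the first five points -/
noncomputable def Fpoly (k : Type*) [Field k] (n : ℕ) (hn : 5 ≤ n) :
    MvPolynomial (Fin n × Fin 4) k :=
  (Matrix.of fun r c : Fin 4 =>
      (X (Fin.castLE (by omega : 4 ≤ n) c, r) : MvPolynomial (Fin n × Fin 4) k)).det *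
  ∏ i : Fin 4, ((Matrix.of fun r c : Fin 4 =>
      (X (Fin.castLE (by omega : 4 ≤ n) c, r) : MvPolynomial (Fin n × Fin 4) k)).updateCol i
        (fun r => X (⟨4, by omega⟩, r))).det

lemma eval_Fpoly {n : ℕ} (hn : 5 ≤ n) (p : Fin n → (Fin 4 → k)) :
    eval (fun q : Fin n × Fin 4 => p q.1 q.2) (Fpoly k n hn)
      = (Matrix.of fun r c : Fin 4 => p (Fin.castLE (by omega : 4 ≤ n) c) r).det *
        ∏ i : Fin 4, ((Matrix.of fun r c : Fin 4 =>
          p (Fin.castLE (by omega : 4 ≤ n) c) r).updateCol i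
            (fun r => p ⟨4, by omega⟩ r)).det := by
  rw [Fpoly, map_mul, map_prod]
  congr 1
  · rw [RingHom.map_det]
    congr 1
    ext r c
    simp [Matrix.map_apply]
  · apply Finset.prod_congr rfl
    intro i _
    rw [RingHom.map_det]
    congr 1
    ext r c
    simp [Matrix.map_apply, Matrix.updateCol_apply,
      apply_ite (eval (fun q : Fin n × Fin 4 => p q.1 q.2))]

lemma vander_ne [CharZero k] (v : Fin 4 → ℕ) (hv : Function.Injective v) :
    (Matrix.vandermonde (fun i => ((v i : ℕ) : k))).det ≠ 0 := by
  rw [Matrix.det_vandermonde]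
  apply Finset.prod_ne_zero_iff.2
  intro i _
  apply Finset.prod_ne_zero_iff.2
  intro j hj
  have hne : v j ≠ v i := fun h => (Finset.mem_Ioi.1 hj).ne' (hv h)
  exact sub_ne_zero.2 (fun h => hne (Nat.cast_injective h))

lemma witness_good [CharZero k] (n : ℕ) (hn : 5 ≤ n) :
    eval (fun q : Fin n × Fin 4 => ((q.1 : ℕ) : k) ^ (q.2 : ℕ)) (Fpoly k n hn) ≠ 0 := by
  have hev := eval_Fpoly (k := k) hn (fun j i => ((j : ℕ) : k) ^ (i : ℕ))
  rw [hev]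
  apply mul_ne_zero
  · have hM : (Matrix.of fun r c : Fin 4 =>
        (((Fin.castLE (by omega : 4 ≤ n) c : Fin n) : ℕ) : k) ^ (r : ℕ))
        = (Matrix.vandermonde (fun c : Fin 4 => (((c : ℕ) : ℕ) : k)))ᵀ := by
      ext r c
      simp [Matrix.vandermonde, Fin.coe_castLE]
    rw [hM, Matrix.det_transpose]
    exact vander_ne (fun c : Fin 4 => (c : ℕ)) (fun a b hab => Fin.ext hab)
  · apply Finset.prod_ne_zero_iff.2
    intro i _
    have h1 : (Matrix.of fun r c : Fin 4 =>
        (((Fin.castLE (by omega : 4 ≤ n) c : Fin n) : ℕ) : k) ^ (r : ℕ)).updateCol i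
          (fun r : Fin 4 => (((⟨4, by omega⟩ : Fin n) : ℕ) : k) ^ (r : ℕ))
        = (Matrix.vandermonde (fun c : Fin 4 =>
            (((if c = i then 4 else (c : ℕ)) : ℕ) : k)))ᵀ := by
      ext r c
      rw [Matrix.updateCol_apply]
      rcases eq_or_ne c i with rfl | hne
      · simp [Matrix.vandermonde]
      · simp [Matrix.vandermonde, hne, Fin.coe_castLE]
    rw [h1, Matrix.det_transpose]
    have hinj : Function.Injective (fun c : Fin 4 => if c = i then (4 : ℕ) else (c : ℕ)) := by
      intro a b hab
      simp only at hab
      have ha4 := a.isLt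
      have hb4 := b.isLt
      split_ifs at hab with h1 h2 h2
      · rw [h1, h2]
      · exact absurd hab (by omega)
      · exact absurd hab (by omega)
      · exact Fin.ext hab
    exact vander_ne _ hinj

lemma generic_imp [CharZero k] {n : ℕ} (hn : 5 ≤ n) (p : Fin n → (Fin 4 → k))
    (hp : ∀ j, p j ≠ 0)
    (hF : eval (fun q : Fin n × Fin 4 => p q.1 q.2) (Fpoly k n hn) ≠ 0)
    (m : ℕ) (hm : 1 ≤ m) :
    5 * m ≤ alpha (fatIdeal p (fun _ => 3 * m)) := by
  rw [eval_Fpoly hn p] at hF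
  rcases mul_ne_zero_iff.1 hF with ⟨hA, hProd⟩
  have hAu := Finset.prod_ne_zero_iff.1 hProd
  exact good_bound hn p hp _ (fun r c => rfl) hA (fun i => hAu i (Finset.mem_univ i)) m hm

end Stmt11

/-- For every `5 ≤ n ≤ 7` and `n` points in general position in `ℙ³`, the radical
ideal `I = I(1^{×n})` satisfies `γ(I) ≥ 5/3`; in fact, for `5` general points,
`α(I(1^{×5})^(3m)) ≥ 5m` for all `m ≥ 1`. -/
theorem statement11 (k : Type*) [Field k] [CharZero k] :
    (∀ n : ℕ, 5 ≤ n → n ≤ 7 →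
      Generic k 3 n (fun p =>
        ∀ γ : ℝ, Tendsto (alphaSeq p (fun _ => 1)) atTop (nhds γ) → 5 / 3 ≤ γ)) ∧
    Generic k 3 5 (fun p =>
      ∀ m : ℕ, 1 ≤ m → 5 * m ≤ alpha (fatIdeal p (fun _ => 3 * m))) := by
  constructor
  · intro n hn5 _
    refine ⟨{Stmt11.Fpoly k n hn5}, ⟨fun j i => ((j : ℕ) : k) ^ (i : ℕ), fun j => ?_,
      ⟨Stmt11.Fpoly k n hn5, rfl, Stmt11.witness_good n hn5⟩⟩, ?_⟩
    · intro hz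
      have h0 := congrFun hz 0
      simp at h0
    · rintro p hp ⟨f, hfS, hfne⟩
      rw [Set.mem_singleton_iff] at hfS
      subst hfS
      intro γ hγ
      have hbound : ∀ m : ℕ, 1 ≤ m → (5 : ℝ) / 3 ≤ alphaSeq p (fun _ => 1) (3 * m) := by
        intro m hm
        have h1 : fatIdeal p (fun j : Fin n => (3 * m) * (fun _ : Fin n => 1) j)
            = fatIdeal p (fun _ : Fin n => 3 * m) := by
          congr 1
          funext j
          simp
        have h2 := Stmt11.generic_imp hn5 p hp hfne m hm
        simp only [alphaSeq, h1]
        have hm3 : (0 : ℝ) < ((3 * m : ℕ) : ℝ) := by exact_mod_cast (by omega : 0 < 3 * m)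
        rw [div_le_div_iff₀ (by norm_num) hm3]
        have h3 : ((5 * m : ℕ) : ℝ) ≤ ((alpha (fatIdeal p fun _ => 3 * m) : ℕ) : ℝ) :=
          Nat.cast_le.2 h2
        push_cast at h3 ⊢
        nlinarith [h3]
      have hcomp : Tendsto (fun m : ℕ => alphaSeq p (fun _ => 1) (3 * m)) atTop (nhds γ) :=
        hγ.comp (tendsto_atTop_mono (fun m : ℕ => by simp only [id_eq]; omega) tendsto_id)
      refine ge_of_tendsto hcomp ?_
      filter_upwards [Filter.eventually_ge_atTop 1] with m hm
      exact hbound m hm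
  · refine ⟨{Stmt11.Fpoly k 5 (le_refl 5)}, ⟨fun j i => ((j : ℕ) : k) ^ (i : ℕ), fun j => ?_,
      ⟨Stmt11.Fpoly k 5 (le_refl 5), rfl, Stmt11.witness_good 5 (le_refl 5)⟩⟩, ?_⟩
    · intro hz
      have h0 := congrFun hz 0
      simp at h0
    · rintro p hp ⟨f, hfS, hfne⟩
      rw [Set.mem_singleton_iff] at hfS
      subst hfS
      exact Stmt11.generic_imp (le_refl 5) p hp hfne
end

section
/- For points p_1,…,p_5 in general position in P^3, the fat points ideal I(2,2,1,1,1) = m_{p_1}^2 ∩ m_{p_2}^2 ∩ m_{p_3} ∩ m_{p_4} ∩ m_{p_5} satisfies γ(I(2,2,1,1,1)) ≥ 7/3; in fact the fat points ideal I(6m,6m,3m,3m,3m) contains no nonzero form of degree 7m−1 for any integer m ≥ 1. -/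
open MvPolynomial Filter

namespace St14
variable {k : Type*} [Field k]





/-- sum of all exponents -/
lemma homog_supp_sum {f : MvPolynomial (Fin 4) k} {n : ℕ} (hf : f.IsHomogeneous n)
    {e : Fin 4 →₀ ℕ} (he : e ∈ f.support) : ∑ i, e i = n := by
  have h := hf (MvPolynomial.mem_support_iff.1 he)
  rw [Finsupp.weight_apply] at h
  rw [← h, Finsupp.sum_fintype]
  · simp
  · intro i; simp

/-- weight of an exponent vector away from coordinate `i` -/
def wt (i : Fin 4) (e : Fin 4 →₀ ℕ) : ℕ := ∑ j ∈ Finset.univ.erase i, e j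

lemma wt_add_self (i : Fin 4) (e : Fin 4 →₀ ℕ) : e i + wt i e = ∑ j, e j := by
  rw [wt, Finset.add_sum_erase _ _ (Finset.mem_univ i)]

lemma wt_add (i : Fin 4) (a b : Fin 4 →₀ ℕ) : wt i (a + b) = wt i a + wt i b := by
  simp [wt, Finset.sum_add_distrib]

/-- the ideal of the coordinate point `e_i` -/
noncomputable def V (k : Type*) [Field k] (i : Fin 4) : Ideal (MvPolynomial (Fin 4) k) :=
  Ideal.span {g | ∃ j, j ≠ i ∧ g = X j}

/-- the "all exponent vectors have weight ≥ t" ideal -/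
noncomputable def J (k : Type*) [Field k] (i : Fin 4) (t : ℕ) : Ideal (MvPolynomial (Fin 4) k) where
  carrier := {f | ∀ e ∈ f.support, t ≤ wt i e}
  add_mem' := by
    intro a b ha hb e he
    rcases Finset.mem_union.1 (MvPolynomial.support_add he) with h | h
    exacts [ha e h, hb e h]
  zero_mem' := by intro e he; simp at he
  smul_mem' := by
    intro r f hf e he
    rw [smul_eq_mul] at he
    rcases Finset.mem_add.1 (MvPolynomial.support_mul _ _ he) with ⟨a, ha, b, hb, rfl⟩
    rw [wt_add]
    exact le_add_of_le_right (hf b hb)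

lemma mem_J {i : Fin 4} {t : ℕ} {f : MvPolynomial (Fin 4) k} :
    f ∈ J k i t ↔ ∀ e ∈ f.support, t ≤ wt i e := Iff.rfl

lemma V_pow_le (i : Fin 4) (t : ℕ) : (V k i) ^ t ≤ J k i t := by
  induction t with
  | zero => intro f _; rw [mem_J]; intro e _; exact Nat.zero_le _
  | succ t ih =>
    rw [pow_succ]
    rw [Ideal.mul_le]
    intro r hr s hs e he
    rcases Finset.mem_add.1 (MvPolynomial.support_mul _ _ he) with ⟨a, ha, b, hb, rfl⟩
    rw [wt_add]
    have h1 : t ≤ wt i a := ih hr a ha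
    have h2 : 1 ≤ wt i b := by
      -- s ∈ V i, show support weights ≥ 1
      have : s ∈ J k i 1 := by
        revert hs
        have : V k i ≤ J k i 1 := by
          rw [V, Ideal.span_le]
          rintro g ⟨j, hj, rfl⟩ e he
          rw [MvPolynomial.support_X] at he
          simp only [Finset.mem_singleton] at he
          subst he
          have : wt i (Finsupp.single j 1) = 1 := by
            rw [wt, Finset.sum_eq_single j]
            · simp
            · intro b _ hbj; simp [Finsupp.single_apply, Ne.symm hbj]
            · intro h; exact absurd (Finset.mem_erase.2 ⟨hj, Finset.mem_univ j⟩) h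
          omega
        exact fun hs => this hs
      exact this b hb
    omega

lemma monomial_mem_V_pow {i : Fin 4} {t : ℕ} {e : Fin 4 →₀ ℕ} {c : k}
    (h : t ≤ wt i e) : monomial e c ∈ (V k i) ^ t := by
  induction t generalizing e with
  | zero => simp [Ideal.one_eq_top]
  | succ t ih =>
    have hex : ∃ j, j ≠ i ∧ e j ≠ 0 := by
      by_contra hc
      push_neg at hc
      have : wt i e = 0 := by
        rw [wt]
        apply Finset.sum_eq_zero
        intro j hj
        exact hc j (Finset.mem_erase.1 hj).1
      omega
    obtain ⟨j, hji, hej⟩ := hex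
    have hsplit : e = Finsupp.single j 1 + (e - Finsupp.single j 1) := by
      ext l
      by_cases hl : l = j
      · subst hl; simp [Finsupp.single_apply]; omega
      · simp [Finsupp.single_apply, Ne.symm hl]
    have hX : (X j : MvPolynomial (Fin 4) k) = monomial (Finsupp.single j 1) 1 := by
      rw [← X_pow_eq_monomial, pow_one]
    have hmon : monomial e c = X j * monomial (e - Finsupp.single j 1) c := by
      rw [hX, monomial_mul, one_mul, ← hsplit]
    rw [hmon, pow_succ, mul_comm ((V k i) ^ t)]
    refine Ideal.mul_mem_mul ?_ (ih ?_)
    · exact Ideal.subset_span ⟨j, hji, rfl⟩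
    · have hmem : j ∈ Finset.univ.erase i := Finset.mem_erase.2 ⟨hji, Finset.mem_univ j⟩
      have ha := Finset.sum_erase_add (Finset.univ.erase i)
        (fun l => ((e - Finsupp.single j 1 : Fin 4 →₀ ℕ)) l) hmem
      have hb := Finset.sum_erase_add (Finset.univ.erase i) (fun l => e l) hmem
      have hc : ∑ l ∈ (Finset.univ.erase i).erase j,
          ((e - Finsupp.single j 1 : Fin 4 →₀ ℕ)) l
          = ∑ l ∈ (Finset.univ.erase i).erase j, e l := by
        refine Finset.sum_congr rfl fun l hl => ?_
        have hlj : l ≠ j := (Finset.mem_erase.1 hl).1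
        rw [Finsupp.tsub_apply, Finsupp.single_apply, if_neg (Ne.symm hlj)]
        omega
      have hj : ((e - Finsupp.single j 1 : Fin 4 →₀ ℕ)) j = e j - 1 := by
        rw [Finsupp.tsub_apply, Finsupp.single_apply, if_pos rfl]
      have hwt : wt i (e - Finsupp.single j 1) = ∑ l ∈ Finset.univ.erase i,
          ((e - Finsupp.single j 1 : Fin 4 →₀ ℕ)) l := rfl
      have hwt2 : wt i e = ∑ l ∈ Finset.univ.erase i, e l := rfl
      omega

lemma mem_V_pow {i : Fin 4} {t : ℕ} {f : MvPolynomial (Fin 4) k} :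
    f ∈ (V k i) ^ t ↔ ∀ e ∈ f.support, t ≤ wt i e := by
  constructor
  · exact fun h => V_pow_le i t h
  · intro h
    rw [f.as_sum]
    exact Ideal.sum_mem _ fun e he => monomial_mem_V_pow (h e he)




lemma homog_supp_sum0 {f : MvPolynomial (Fin 4) k} {n : ℕ} (hf : f.IsHomogeneous n)
    {e : Fin 4 →₀ ℕ} (he : e ∈ f.support) : ∑ i, e i = n := by
  have h := hf (MvPolynomial.mem_support_iff.1 he)
  rw [Finsupp.weight_apply] at h
  rw [← h, Finsupp.sum_fintype]
  · simp
  · intro i; simp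

lemma isHomog_aeval {g : Fin 4 → MvPolynomial (Fin 4) k} {r : ℕ}
    (hg : ∀ i, (g i).IsHomogeneous r) {f : MvPolynomial (Fin 4) k} {n : ℕ}
    (hf : f.IsHomogeneous n) : (aeval g f).IsHomogeneous (r * n) := by
  conv_lhs => rw [f.as_sum]
  rw [map_sum]
  apply IsHomogeneous.sum
  intro e he
  rw [aeval_monomial]
  have hprod : (Finsupp.prod e fun i l => g i ^ l) = ∏ i, g i ^ e i :=
    Finsupp.prod_fintype _ _ (fun i => pow_zero _)
  rw [hprod]
  have h1 : (∏ i, g i ^ e i).IsHomogeneous (∑ i, r * e i) :=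
    IsHomogeneous.prod _ _ _ (fun i _ => (hg i).pow (e i))
  have hsum : ∑ i, r * e i = r * n := by
    rw [← Finset.mul_sum, homog_supp_sum0 hf he]
  have h2 : ((algebraMap k (MvPolynomial (Fin 4) k)) (coeff e f)).IsHomogeneous 0 := by
    rw [MvPolynomial.algebraMap_eq]
    exact isHomogeneous_C _ _
  have h3 := h2.mul h1
  rw [zero_add, hsum] at h3
  exact h3

lemma homog_supp_sum' {f : MvPolynomial (Fin 4) k} {n : ℕ} (hf : f.IsHomogeneous n)
    {e : Fin 4 →₀ ℕ} (he : e ∈ f.support) : ∑ i, e i = n := by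
  have h := hf (MvPolynomial.mem_support_iff.1 he)
  rw [Finsupp.weight_apply] at h
  rw [← h, Finsupp.sum_fintype]
  · simp
  · intro i; simp

/-- transport of memberships in powers of point ideals under substitutions -/
lemma mem_pointIdeal_pow_aeval {g : Fin 4 → MvPolynomial (Fin 4) k} {r : ℕ}
    (hg : ∀ i, (g i).IsHomogeneous r) {p q : Fin 4 → k}
    (hq : ∀ i, eval q (g i) = p i) {s : ℕ} {f : MvPolynomial (Fin 4) k}
    (hf : f ∈ pointIdeal p ^ s) : aeval g f ∈ pointIdeal q ^ s := by
  have hmap : Ideal.map (aeval g : MvPolynomial (Fin 4) k →ₐ[k] MvPolynomial (Fin 4) k)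
      (pointIdeal p) ≤ pointIdeal q := by
    rw [pointIdeal, Ideal.map_span, Ideal.span_le]
    rintro _ ⟨h, ⟨⟨d, hd⟩, hev⟩, rfl⟩
    refine Ideal.subset_span ⟨⟨r * d, isHomog_aeval hg hd⟩, ?_⟩
    have hcomp : (eval q) (aeval g h) = aeval (fun i => aeval q (g i)) h := by
      rw [show (eval q) ((aeval g) h) = ((aeval q).comp (aeval g)) h from rfl, comp_aeval]
    rw [hcomp]
    have : (fun i => aeval q (g i)) = p := by funext i; exact hq i
    rw [this]
    exact hev
  have := Ideal.mem_map_of_mem (aeval g : MvPolynomial (Fin 4) k →ₐ[k] MvPolynomial (Fin 4) k) hf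
  rw [Ideal.map_pow] at this
  exact Ideal.pow_right_mono hmap s this

/-- linear substitution -/
noncomputable def lin (M : Matrix (Fin 4) (Fin 4) k) :
    MvPolynomial (Fin 4) k →ₐ[k] MvPolynomial (Fin 4) k :=
  aeval (fun i => ∑ j, C (M i j) * X j)

lemma lin_X (M : Matrix (Fin 4) (Fin 4) k) (i : Fin 4) :
    lin M (X i) = ∑ j, C (M i j) * X j := aeval_X _ _

lemma lin_homog (M : Matrix (Fin 4) (Fin 4) k) (i : Fin 4) :
    (∑ j, C (M i j) * X j : MvPolynomial (Fin 4) k).IsHomogeneous 1 := by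
  apply IsHomogeneous.sum
  intro j _
  have := (isHomogeneous_C (σ := Fin 4) (M i j)).mul (isHomogeneous_X k j)
  simpa using this

lemma eval_lin (M : Matrix (Fin 4) (Fin 4) k) (p : Fin 4 → k) (i : Fin 4) :
    eval p (lin M (X i)) = M.mulVec p i := by
  rw [lin_X]
  simp [Matrix.mulVec, dotProduct]

lemma eval_lin_pt (M : Matrix (Fin 4) (Fin 4) k) (p : Fin 4 → k) :
    ∀ i, eval p (∑ j, C (M i j) * X j : MvPolynomial (Fin 4) k) = M.mulVec p i := by
  intro i; simp [Matrix.mulVec, dotProduct]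

lemma mem_pointIdeal_pow_lin {M : Matrix (Fin 4) (Fin 4) k} {p : Fin 4 → k}
    {s : ℕ} {f : MvPolynomial (Fin 4) k}
    (hf : f ∈ pointIdeal (M.mulVec p) ^ s) : lin M f ∈ pointIdeal p ^ s :=
  mem_pointIdeal_pow_aeval (fun i => lin_homog M i) (eval_lin_pt M p) hf

lemma lin_lin (M N : Matrix (Fin 4) (Fin 4) k) (f : MvPolynomial (Fin 4) k) :
    lin M (lin N f) = lin (N * M) f := by
  have hcomp : lin M (lin N f)
      = aeval (fun i => lin M (∑ j, C (N i j) * X j)) f := by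
    rw [show lin M (lin N f) = ((lin M).comp (lin (k := k) N)) f from rfl]
    rw [lin, lin, comp_aeval]
  rw [hcomp]
  have h2 : (fun i => lin M (∑ j, C (N i j) * X j))
      = (fun i => ∑ l, C ((N * M) i l) * X l) := by
    funext i
    rw [map_sum]
    have h1 : ∀ j, lin M (C (N i j) * X j) = ∑ l, C (N i j * M j l) * X l := by
      intro j
      rw [map_mul]
      have hC : lin M (C (N i j)) = C (N i j) := by
        simpa using (lin M).commutes (N i j)
      rw [hC, lin_X, Finset.mul_sum]
      refine Finset.sum_congr rfl fun l _ => ?_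
      rw [← mul_assoc, ← C_mul]
    rw [Finset.sum_congr rfl fun j _ => h1 j, Finset.sum_comm]
    refine Finset.sum_congr rfl fun l _ => ?_
    rw [Matrix.mul_apply, ← Finset.sum_mul]
    congr 1
    rw [map_sum]
  rw [h2]
  rfl

lemma lin_one (f : MvPolynomial (Fin 4) k) : lin 1 f = f := by
  have : (fun i => ∑ j, C ((1 : Matrix (Fin 4) (Fin 4) k) i j) * X j)
      = (X : Fin 4 → MvPolynomial (Fin 4) k) := by
    funext i
    rw [Finset.sum_eq_single i]
    · simp [Matrix.one_apply]
    · intro j _ hj; simp [Matrix.one_apply, Ne.symm hj]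
    · simp
  rw [lin, this, aeval_X_left_apply]

/-- evaluation of homogeneous polynomials at scaled points -/
lemma eval_smul_homog {f : MvPolynomial (Fin 4) k} {n : ℕ} (hf : f.IsHomogeneous n)
    (c : k) (p : Fin 4 → k) : eval (fun i => c * p i) f = c ^ n * eval p f := by
  rw [eval_eq', eval_eq', Finset.mul_sum]
  refine Finset.sum_congr rfl fun e he => ?_
  have hsum : ∑ i, e i = n := homog_supp_sum' hf he
  rw [← hsum]
  have : ∏ i, (c * p i) ^ e i = (∏ i, c ^ e i) * ∏ i, p i ^ e i := by
    rw [← Finset.prod_mul_distrib]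
    exact Finset.prod_congr rfl fun i _ => mul_pow c (p i) (e i)
  rw [this, Finset.prod_pow_eq_pow_sum]
  ring

lemma pointIdeal_smul {c : k} (hc : c ≠ 0) (p : Fin 4 → k) :
    pointIdeal (fun i => c * p i) = pointIdeal p := by
  have key : ∀ (c : k), c ≠ 0 → ∀ (p : Fin 4 → k),
      pointIdeal (fun i => c * p i) ≤ pointIdeal p := by
    intro c hc p
    rw [pointIdeal, Ideal.span_le]
    rintro f ⟨⟨d, hd⟩, hev⟩
    refine Ideal.subset_span ⟨⟨d, hd⟩, ?_⟩
    rw [eval_smul_homog hd c p] at hev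
    exact (mul_eq_zero.1 hev).resolve_left (pow_ne_zero d hc)
  refine le_antisymm (key c hc p) ?_
  have := key c⁻¹ (inv_ne_zero hc) (fun i => c * p i)
  have heq : (fun i => c⁻¹ * (c * p i)) = p := by
    funext i; field_simp
  rw [heq] at this
  exact this




lemma wt_add_single_self (i : Fin 4) (e : Fin 4 →₀ ℕ) :
    wt i (e + Finsupp.single i 1) = wt i e := by
  rw [wt, wt]
  refine Finset.sum_congr rfl fun l hl => ?_
  have : l ≠ i := (Finset.mem_erase.1 hl).1
  simp [Finsupp.single_apply, Ne.symm this]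

/-- strip a linear factor whose `i`-th coefficient is nonzero -/
lemma strip {i : Fin 4} {v : Fin 4 → k} (hv : v i ≠ 0) {t : ℕ} {f : MvPolynomial (Fin 4) k}
    (h : (∑ l, C (v l) * X l) * f ∈ (V k i) ^ t) : f ∈ (V k i) ^ t := by
  by_cases hf : f = 0
  · subst hf; exact zero_mem _
  rw [mem_V_pow] at h ⊢
  -- minimal weight in the support of f
  have hne : (f.support.image (wt i)).Nonempty := by
    refine Finset.image_nonempty.2 ?_
    rwa [Finset.nonempty_iff_ne_empty, Ne, MvPolynomial.support_eq_empty]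
  set t₀ := (f.support.image (wt i)).min' hne with ht₀
  obtain ⟨e₀, he₀, hwe₀⟩ := Finset.mem_image.1 ((f.support.image (wt i)).min'_mem hne)
  -- the coefficient of e₀ + δᵢ in the product is v i * coeff e₀ f
  have hkey : coeff (e₀ + Finsupp.single i 1) ((∑ l, C (v l) * X l) * f)
      = v i * coeff e₀ f := by
    rw [Finset.sum_mul]
    rw [show coeff (e₀ + Finsupp.single i 1) (∑ l, C (v l) * X l * f)
      = ∑ l, coeff (e₀ + Finsupp.single i 1) (C (v l) * (X l * f)) by
        rw [← MvPolynomial.coeff_sum]; congr 1; refine Finset.sum_congr rfl fun l _ => ?_;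
        rw [mul_assoc]]
    rw [Finset.sum_eq_single i]
    · rw [coeff_C_mul, coeff_X_mul']
      have hmem : i ∈ (e₀ + Finsupp.single i 1).support := by
        rw [Finsupp.mem_support_iff]
        simp [Finsupp.single_apply]
      rw [if_pos hmem]
      congr 1
      · congr 1
        ext l
        by_cases hl : l = i
        · subst hl; simp [Finsupp.single_apply]
        · simp [Finsupp.single_apply, Ne.symm hl, hl]
    · intro l _ hli
      rw [coeff_C_mul, coeff_X_mul']
      by_cases hmem : l ∈ (e₀ + Finsupp.single i 1).support
      · rw [if_pos hmem]
        have hval : ((e₀ + Finsupp.single i 1) : Fin 4 →₀ ℕ) l = e₀ l := by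
          simp [Finsupp.single_apply, Ne.symm hli, hli]
        have hl0 : e₀ l ≠ 0 := by
          rw [Finsupp.mem_support_iff] at hmem
          rw [hval] at hmem; exact hmem
        -- the index has weight t₀ - 1 < t₀ hence is not in the support
        have hnotin : (e₀ + Finsupp.single i 1 - Finsupp.single l 1 : Fin 4 →₀ ℕ)
            ∉ f.support := by
          intro hin
          have hwlt : wt i (e₀ + Finsupp.single i 1 - Finsupp.single l 1) + 1 = t₀ := by
            rw [wt, ht₀, ← hwe₀, wt]
            have hlerase : l ∈ Finset.univ.erase i :=
              Finset.mem_erase.2 ⟨hli, Finset.mem_univ l⟩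
            rw [← Finset.sum_erase_add _ _ hlerase, ← Finset.sum_erase_add _
              (fun j => e₀ j) hlerase]
            have hcong : ∀ x ∈ (Finset.univ.erase i).erase l,
                ((e₀ + Finsupp.single i 1 - Finsupp.single l 1 : Fin 4 →₀ ℕ)) x = e₀ x := by
              intro x hx
              have hxl : x ≠ l := (Finset.mem_erase.1 hx).1
              have hxi : x ≠ i := (Finset.mem_erase.1 ((Finset.mem_erase.1 hx).2)).1
              rw [Finsupp.tsub_apply]
              simp [Finsupp.single_apply, Ne.symm hxl, Ne.symm hxi]
            rw [Finset.sum_congr rfl hcong]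
            have hval2 : ((e₀ + Finsupp.single i 1 - Finsupp.single l 1 : Fin 4 →₀ ℕ)) l
                = e₀ l - 1 := by
              rw [Finsupp.tsub_apply]
              simp [Finsupp.single_apply, Ne.symm hli, hli]
            rw [hval2]
            have hcoe : ((Finset.univ.erase i).erase l).sum ⇑e₀
                = ∑ x ∈ (Finset.univ.erase i).erase l, e₀ x := rfl
            rw [hcoe]
            omega
          have := Finset.min'_le _ _ (Finset.mem_image_of_mem (wt i) hin)
          rw [← ht₀] at this
          omega
        rw [MvPolynomial.notMem_support_iff.1 hnotin, mul_zero]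
      · rw [if_neg hmem, mul_zero]
    · intro hni; exact absurd (Finset.mem_univ i) hni
  have hne0 : coeff (e₀ + Finsupp.single i 1) ((∑ l, C (v l) * X l) * f) ≠ 0 := by
    rw [hkey]
    exact mul_ne_zero hv (MvPolynomial.mem_support_iff.1 he₀)
  have hmemprod := MvPolynomial.mem_support_iff.2 hne0
  have hb := h _ hmemprod
  rw [wt_add_single_self] at hb
  intro e he
  have := Finset.min'_le _ _ (Finset.mem_image_of_mem (wt i) he)
  rw [← ht₀] at this
  omega

lemma strip_pow {i : Fin 4} {v : Fin 4 → k} (hv : v i ≠ 0) {t n : ℕ}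
    {f : MvPolynomial (Fin 4) k}
    (h : (∑ l, C (v l) * X l) ^ n * f ∈ (V k i) ^ t) : f ∈ (V k i) ^ t := by
  induction n generalizing f with
  | zero => simpa using h
  | succ n ih =>
    rw [pow_succ', mul_assoc] at h
    exact ih (strip hv h)





lemma pointIdeal_single (i : Fin 4) :
    pointIdeal (Pi.single i 1 : Fin 4 → k) = V k i := by
  apply le_antisymm
  · rw [pointIdeal, Ideal.span_le]
    rintro f ⟨⟨d, hd⟩, hev⟩
    rw [f.as_sum]
    refine Ideal.sum_mem _ fun e he => ?_
    -- find j ≠ i with e j ≠ 0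
    have hex : ∃ j, j ≠ i ∧ e j ≠ 0 := by
      by_contra hc
      push_neg at hc
      -- then e = single i d and the coefficient is the evaluation, which is 0
      have hei : e i = d := by
        have := homog_supp_sum hd he
        rw [← this, Finset.sum_eq_single i]
        · intro b _ hb; exact hc b hb
        · intro h; exact absurd (Finset.mem_univ i) h
      have heval : eval (Pi.single i 1 : Fin 4 → k) f = coeff e f := by
        rw [eval_eq']
        rw [Finset.sum_eq_single e]
        · have : ∏ l, (Pi.single i 1 : Fin 4 → k) l ^ e l = 1 := by
            apply Finset.prod_eq_one
            intro l _
            by_cases hl : l = i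
            · subst hl; simp
            · rw [hc l hl, pow_zero]
          rw [this, mul_one]
        · intro e' he' hne
          -- e' also in support; if it has off-i support the product vanishes,
          -- otherwise e' = e
          by_cases hoff : ∃ j, j ≠ i ∧ e' j ≠ 0
          · obtain ⟨j, hji, hj⟩ := hoff
            have : ∏ l, (Pi.single i 1 : Fin 4 → k) l ^ e' l = 0 := by
              apply Finset.prod_eq_zero (Finset.mem_univ j)
              rw [Pi.single_eq_of_ne hji, zero_pow hj]
            rw [this, mul_zero]
          · push_neg at hoff
            exfalso
            apply hne
            have he'i : e' i = d := by
              have := homog_supp_sum hd he'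
              rw [← this, Finset.sum_eq_single i]
              · intro b _ hb; exact hoff b hb
              · intro h; exact absurd (Finset.mem_univ i) h
            ext l
            by_cases hl : l = i
            · subst hl; rw [he'i, hei]
            · rw [hoff l hl, hc l hl]
        · intro hne; exact absurd he hne
      rw [heval] at hev
      rw [MvPolynomial.mem_support_iff] at he
      exact he hev
    obtain ⟨j, hji, hj⟩ := hex
    have hsplit : e = Finsupp.single j 1 + (e - Finsupp.single j 1) := by
      ext l
      by_cases hl : l = j
      · subst hl; simp [Finsupp.single_apply]; omega
      · simp [Finsupp.single_apply, Ne.symm hl]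
    have hX : (X j : MvPolynomial (Fin 4) k) = monomial (Finsupp.single j 1) 1 := by
      rw [← X_pow_eq_monomial, pow_one]
    have hmon : monomial e (coeff e f) = X j * monomial (e - Finsupp.single j 1) (coeff e f) := by
      rw [hX, monomial_mul, one_mul, ← hsplit]
    rw [hmon]
    exact Ideal.mul_mem_right _ _ (Ideal.subset_span ⟨j, hji, rfl⟩)
  · rw [V, Ideal.span_le]
    rintro g ⟨j, hji, rfl⟩
    refine Ideal.subset_span ⟨⟨1, isHomogeneous_X k j⟩, ?_⟩
    rw [eval_X, Pi.single_eq_of_ne hji]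

/-- explicit exponent vectors -/
noncomputable def mk4 (a b c d : ℕ) : Fin 4 →₀ ℕ :=
  Finsupp.single 0 a + Finsupp.single 1 b + Finsupp.single 2 c + Finsupp.single 3 d

lemma mk4_apply_0 (a b c d : ℕ) : mk4 a b c d 0 = a := by
  simp [mk4, Finsupp.single_apply]
lemma mk4_apply_1 (a b c d : ℕ) : mk4 a b c d 1 = b := by
  simp [mk4, Finsupp.single_apply]
lemma mk4_apply_2 (a b c d : ℕ) : mk4 a b c d 2 = c := by
  simp [mk4, Finsupp.single_apply]
lemma mk4_apply_3 (a b c d : ℕ) : mk4 a b c d 3 = d := by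
  simp [mk4, Finsupp.single_apply]

lemma mk4_eq_iff {a b c d a' b' c' d' : ℕ} :
    mk4 a b c d = mk4 a' b' c' d' ↔ a = a' ∧ b = b' ∧ c = c' ∧ d = d' := by
  constructor
  · intro h
    refine ⟨?_, ?_, ?_, ?_⟩
    · have := congrFun (congrArg (fun e : Fin 4 →₀ ℕ => (e : Fin 4 → ℕ)) h) 0
      simpa [mk4_apply_0] using this
    · have := congrFun (congrArg (fun e : Fin 4 →₀ ℕ => (e : Fin 4 → ℕ)) h) 1
      simpa [mk4_apply_1] using this
    · have := congrFun (congrArg (fun e : Fin 4 →₀ ℕ => (e : Fin 4 → ℕ)) h) 2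
      simpa [mk4_apply_2] using this
    · have := congrFun (congrArg (fun e : Fin 4 →₀ ℕ => (e : Fin 4 → ℕ)) h) 3
      simpa [mk4_apply_3] using this
  · rintro ⟨rfl, rfl, rfl, rfl⟩; rfl

lemma eq_mk4 (e : Fin 4 →₀ ℕ) : e = mk4 (e 0) (e 1) (e 2) (e 3) := by
  ext l
  fin_cases l <;> simp [mk4_apply_0, mk4_apply_1, mk4_apply_2, mk4_apply_3]

lemma mk4_add (a b c d a' b' c' d' : ℕ) :
    mk4 a b c d + mk4 a' b' c' d' = mk4 (a + a') (b + b') (c + c') (d + d') := by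
  ext l
  fin_cases l <;>
    simp [Finsupp.add_apply, mk4_apply_0, mk4_apply_1, mk4_apply_2, mk4_apply_3]

lemma sum_univ_eq (e : Fin 4 →₀ ℕ) : ∑ i, e i = e 0 + e 1 + e 2 + e 3 := by
  rw [Fin.sum_univ_four]

lemma wt_eq_0 (e : Fin 4 →₀ ℕ) : wt 0 e = e 1 + e 2 + e 3 := by
  rw [wt]
  rw [show Finset.univ.erase (0 : Fin 4) = {1, 2, 3} from by decide]
  simp [Finset.sum_insert, Finset.mem_insert]
  ring
lemma wt_eq_1 (e : Fin 4 →₀ ℕ) : wt 1 e = e 0 + e 2 + e 3 := by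
  rw [wt]
  rw [show Finset.univ.erase (1 : Fin 4) = {0, 2, 3} from by decide]
  simp [Finset.sum_insert, Finset.mem_insert]
  ring
lemma wt_eq_2 (e : Fin 4 →₀ ℕ) : wt 2 e = e 0 + e 1 + e 3 := by
  rw [wt]
  rw [show Finset.univ.erase (2 : Fin 4) = {0, 1, 3} from by decide]
  simp [Finset.sum_insert, Finset.mem_insert]
  ring
lemma wt_eq_3 (e : Fin 4 →₀ ℕ) : wt 3 e = e 0 + e 1 + e 2 := by
  rw [wt]
  rw [show Finset.univ.erase (3 : Fin 4) = {0, 1, 2} from by decide]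
  simp [Finset.sum_insert, Finset.mem_insert]
  ring

/-- Cremona substitution -/
noncomputable def crem : MvPolynomial (Fin 4) k →ₐ[k] MvPolynomial (Fin 4) k :=
  aeval ![X 1 * X 2 * X 3, X 0 * X 2 * X 3, X 0 * X 1 * X 3, X 0 * X 1 * X 2]

lemma monomial_eq_prod (e : Fin 4 →₀ ℕ) (c : k) :
    monomial e c = C c * (X 0 ^ e 0 * X 1 ^ e 1 * X 2 ^ e 2 * X 3 ^ e 3) := by
  rw [monomial_eq]
  congr 1
  rw [Finsupp.prod_fintype _ _ (fun i => pow_zero _), Fin.prod_univ_four]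

lemma crem_monomial (e : Fin 4 →₀ ℕ) (c : k) :
    crem (monomial e c) = monomial
      (mk4 (e 1 + e 2 + e 3) (e 0 + e 2 + e 3) (e 0 + e 1 + e 3) (e 0 + e 1 + e 2)) c := by
  rw [crem, aeval_monomial]
  rw [Finsupp.prod_fintype _ _ (fun i => pow_zero _), Fin.prod_univ_four]
  rw [MvPolynomial.algebraMap_eq]
  rw [show (![X 1 * X 2 * X 3, X 0 * X 2 * X 3, X 0 * X 1 * X 3, X 0 * X 1 * X 2] :
      Fin 4 → MvPolynomial (Fin 4) k) 0 = X 1 * X 2 * X 3 from rfl,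
    show (![X 1 * X 2 * X 3, X 0 * X 2 * X 3, X 0 * X 1 * X 3, X 0 * X 1 * X 2] :
      Fin 4 → MvPolynomial (Fin 4) k) 1 = X 0 * X 2 * X 3 from rfl,
    show (![X 1 * X 2 * X 3, X 0 * X 2 * X 3, X 0 * X 1 * X 3, X 0 * X 1 * X 2] :
      Fin 4 → MvPolynomial (Fin 4) k) 2 = X 0 * X 1 * X 3 from rfl,
    show (![X 1 * X 2 * X 3, X 0 * X 2 * X 3, X 0 * X 1 * X 3, X 0 * X 1 * X 2] :
      Fin 4 → MvPolynomial (Fin 4) k) 3 = X 0 * X 1 * X 2 from rfl]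
  rw [monomial_eq_prod]
  rw [mul_pow, mul_pow, mul_pow, mul_pow, mul_pow, mul_pow, mul_pow, mul_pow]
  rw [mk4_apply_0, mk4_apply_1, mk4_apply_2, mk4_apply_3]
  ring


end St14


namespace St14
variable {k : Type*} [Field k]

lemma degree_eq_sum (e : Fin 4 →₀ ℕ) : e.degree = ∑ i, e i := by
  rw [Finsupp.degree]
  exact Finset.sum_subset (Finset.subset_univ _) fun x _ hx =>
    Finsupp.notMem_support_iff.1 hx

def Mtau : Matrix (Fin 4) (Fin 4) k := !![1,1,0,0; 1,0,1,0; 1,0,0,1; 1,0,0,0]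
def MtauInv : Matrix (Fin 4) (Fin 4) k := !![0,0,0,1; 1,0,0,-1; 0,1,0,-1; 0,0,1,-1]

lemma Mtau_mul_inv : (Mtau : Matrix (Fin 4) (Fin 4) k) * MtauInv = 1 := by
  ext i j
  fin_cases i <;> fin_cases j <;>
    simp [Mtau, MtauInv, Matrix.mul_apply, Fin.sum_univ_four, Matrix.one_apply,
      Matrix.cons_val_zero, Matrix.cons_val_one, Matrix.head_cons, Matrix.vecHead,
      Matrix.vecTail]

lemma Mtau_col0 : ∀ i, (Mtau : Matrix (Fin 4) (Fin 4) k) i 0 = 1 := by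
  intro i; fin_cases i <;>
    simp [Mtau, Matrix.cons_val_zero, Matrix.cons_val_one, Matrix.head_cons,
      Matrix.vecHead, Matrix.vecTail]

lemma Mtau_mulVec_single :
    (Mtau : Matrix (Fin 4) (Fin 4) k).mulVec (Pi.single 0 1) = fun _ => 1 := by
  rw [Matrix.mulVec_single_one]
  funext i
  exact Mtau_col0 i

/-- scaling substitution on homogeneous polynomials -/
lemma aeval_X_mul_scale {S : MvPolynomial (Fin 4) k} {F : MvPolynomial (Fin 4) k} {n : ℕ}
    (hF : F.IsHomogeneous n) : aeval (fun i => X i * S) F = S ^ n * F := by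
  conv_lhs => rw [F.as_sum]
  rw [map_sum]
  conv_rhs => rw [F.as_sum]
  rw [Finset.mul_sum]
  refine Finset.sum_congr rfl fun e he => ?_
  rw [aeval_monomial, Finsupp.prod_fintype _ _ (fun i => pow_zero _), Fin.prod_univ_four]
  rw [MvPolynomial.algebraMap_eq, monomial_eq_prod]
  have hsum : e 0 + e 1 + e 2 + e 3 = n := by
    have := homog_supp_sum hF he
    rw [sum_univ_eq] at this
    exact this
  rw [mul_pow, mul_pow, mul_pow, mul_pow]
  rw [show S ^ n = S ^ (e 0) * S ^ (e 1) * S ^ (e 2) * S ^ (e 3) by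
    rw [← pow_add, ← pow_add, ← pow_add, hsum]]
  ring

lemma crem_crem {F : MvPolynomial (Fin 4) k} {n : ℕ} (hF : F.IsHomogeneous n) :
    crem (crem F) = ((X 0 * X 1 * X 2 * X 3) ^ 2) ^ n * F := by
  have hcomp : crem (crem F) = aeval (fun i =>
      crem ((![X 1 * X 2 * X 3, X 0 * X 2 * X 3, X 0 * X 1 * X 3, X 0 * X 1 * X 2] :
        Fin 4 → MvPolynomial (Fin 4) k) i)) F := by
    rw [show crem (crem F) = ((crem (k := k)).comp crem) F from rfl]
    rw [crem, comp_aeval]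
  rw [hcomp]
  have hc0 : crem (X (0 : Fin 4) : MvPolynomial (Fin 4) k) = X 1 * X 2 * X 3 :=
    (aeval_X _ 0).trans rfl
  have hc1 : crem (X (1 : Fin 4) : MvPolynomial (Fin 4) k) = X 0 * X 2 * X 3 :=
    (aeval_X _ 1).trans rfl
  have hc2 : crem (X (2 : Fin 4) : MvPolynomial (Fin 4) k) = X 0 * X 1 * X 3 :=
    (aeval_X _ 2).trans rfl
  have hc3 : crem (X (3 : Fin 4) : MvPolynomial (Fin 4) k) = X 0 * X 1 * X 2 :=
    (aeval_X _ 3).trans rfl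
  have hfun : (fun i =>
      crem ((![X 1 * X 2 * X 3, X 0 * X 2 * X 3, X 0 * X 1 * X 3, X 0 * X 1 * X 2] :
        Fin 4 → MvPolynomial (Fin 4) k) i))
      = fun i => X i * (X 0 * X 1 * X 2 * X 3) ^ 2 := by
    funext i
    fin_cases i
    · show crem (X 1 * X 2 * X 3 : MvPolynomial (Fin 4) k) = X 0 * (X 0 * X 1 * X 2 * X 3) ^ 2
      rw [map_mul, map_mul, hc1, hc2, hc3]; ring
    · show crem (X 0 * X 2 * X 3 : MvPolynomial (Fin 4) k) = X 1 * (X 0 * X 1 * X 2 * X 3) ^ 2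
      rw [map_mul, map_mul, hc0, hc2, hc3]; ring
    · show crem (X 0 * X 1 * X 3 : MvPolynomial (Fin 4) k) = X 2 * (X 0 * X 1 * X 2 * X 3) ^ 2
      rw [map_mul, map_mul, hc0, hc1, hc3]; ring
    · show crem (X 0 * X 1 * X 2 : MvPolynomial (Fin 4) k) = X 3 * (X 0 * X 1 * X 2 * X 3) ^ 2
      rw [map_mul, map_mul, hc0, hc1, hc2]; ring
  rw [hfun, aeval_X_mul_scale hF]

/-- The heart of the matter: `I(6m,6m,3m,3m,3m)` at the five standard points
contains no nonzero form of degree `7m-1`. -/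
theorem core (m : ℕ) (hm : 1 ≤ m) (F : MvPolynomial (Fin 4) k)
    (hdeg : F.IsHomogeneous (7 * m - 1))
    (h0 : F ∈ pointIdeal (Pi.single 0 1 : Fin 4 → k) ^ (6 * m))
    (h1 : F ∈ pointIdeal (Pi.single 1 1 : Fin 4 → k) ^ (6 * m))
    (h2 : F ∈ pointIdeal (Pi.single 2 1 : Fin 4 → k) ^ (3 * m))
    (h3 : F ∈ pointIdeal (Pi.single 3 1 : Fin 4 → k) ^ (3 * m))
    (h4 : F ∈ pointIdeal (fun _ => (1 : k)) ^ (3 * m)) : F = 0 := by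
  rw [pointIdeal_single, mem_V_pow] at h0 h1 h2 h3
  -- support bounds
  have hbd : ∀ e ∈ F.support, e 0 + e 1 + e 2 + e 3 = 7 * m - 1 ∧
      e 0 + 1 ≤ m ∧ e 1 + 1 ≤ m ∧ e 2 + 1 ≤ 4 * m ∧ e 3 + 1 ≤ 4 * m := by
    intro e he
    have hsum : e 0 + e 1 + e 2 + e 3 = 7 * m - 1 := by
      have := homog_supp_sum hdeg he
      rw [sum_univ_eq] at this; exact this
    have hw0 := h0 e he; rw [wt_eq_0] at hw0
    have hw1 := h1 e he; rw [wt_eq_1] at hw1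
    have hw2 := h2 e he; rw [wt_eq_2] at hw2
    have hw3 := h3 e he; rw [wt_eq_3] at hw3
    omega
  -- the strict transform
  set F' : MvPolynomial (Fin 4) k := ∑ e ∈ F.support,
    monomial (mk4 (m - 1 - e 0) (m - 1 - e 1) (4 * m - 1 - e 2) (4 * m - 1 - e 3))
      (coeff e F) with hF'
  set W : MvPolynomial (Fin 4) k :=
    X 0 ^ (6 * m) * X 1 ^ (6 * m) * X 2 ^ (3 * m) * X 3 ^ (3 * m) with hWdef
  have hW : W = monomial (mk4 (6 * m) (6 * m) (3 * m) (3 * m)) 1 := by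
    rw [monomial_eq_prod, mk4_apply_0, mk4_apply_1, mk4_apply_2, mk4_apply_3, map_one, one_mul]
  have hprod : crem F = W * F' := by
    conv_lhs => rw [F.as_sum, map_sum]
    rw [hF', hW, Finset.mul_sum]
    refine Finset.sum_congr rfl fun e he => ?_
    rw [crem_monomial, monomial_mul, one_mul, mk4_add]
    obtain ⟨hsum, hb0, hb1, hb2, hb3⟩ := hbd e he
    have e1 : 6 * m + (m - 1 - e 0) = e 1 + e 2 + e 3 := by omega
    have e2 : 6 * m + (m - 1 - e 1) = e 0 + e 2 + e 3 := by omega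
    have e3 : 3 * m + (4 * m - 1 - e 2) = e 0 + e 1 + e 3 := by omega
    have e4 : 3 * m + (4 * m - 1 - e 3) = e 0 + e 1 + e 2 := by omega
    rw [e1, e2, e3, e4]
  -- F' is homogeneous of degree 3m - 3
  have hF'homog : F'.IsHomogeneous (3 * m - 3) := by
    rw [hF']
    refine IsHomogeneous.sum _ _ _ fun e he => ?_
    refine isHomogeneous_monomial _ ?_
    rw [degree_eq_sum, sum_univ_eq, mk4_apply_0, mk4_apply_1, mk4_apply_2, mk4_apply_3]
    obtain ⟨hsum, hb0, hb1, hb2, hb3⟩ := hbd e he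
    omega
  -- transport the multiplicity at (1,1,1,1)
  have htriple : ∀ a b c : Fin 4,
      (X a * X b * X c : MvPolynomial (Fin 4) k).IsHomogeneous 3 := by
    intro a b c
    have := ((isHomogeneous_X k a).mul (isHomogeneous_X k b)).mul (isHomogeneous_X k c)
    simpa using this
  have hgcrem : ∀ i, ((![X 1 * X 2 * X 3, X 0 * X 2 * X 3, X 0 * X 1 * X 3, X 0 * X 1 * X 2] :
      Fin 4 → MvPolynomial (Fin 4) k) i).IsHomogeneous 3 := by
    intro i
    fin_cases i
    · exact htriple 1 2 3
    · exact htriple 0 2 3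
    · exact htriple 0 1 3
    · exact htriple 0 1 2
  have hecrem : ∀ i, eval (fun _ => (1 : k))
      ((![X 1 * X 2 * X 3, X 0 * X 2 * X 3, X 0 * X 1 * X 3, X 0 * X 1 * X 2] :
      Fin 4 → MvPolynomial (Fin 4) k) i) = (fun _ => (1:k)) i := by
    intro i
    fin_cases i
    · show eval (fun _ => (1:k)) (X 1 * X 2 * X 3) = 1; simp
    · show eval (fun _ => (1:k)) (X 0 * X 2 * X 3) = 1; simp
    · show eval (fun _ => (1:k)) (X 0 * X 1 * X 3) = 1; simp
    · show eval (fun _ => (1:k)) (X 0 * X 1 * X 2) = 1; simp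
  have hφ5 : crem F ∈ pointIdeal (fun _ => (1 : k)) ^ (3 * m) :=
    mem_pointIdeal_pow_aeval hgcrem hecrem h4
  -- move to coordinates where (1,1,1,1) is the first coordinate point
  have hτ : lin Mtau (crem F) ∈ pointIdeal (Pi.single 0 1 : Fin 4 → k) ^ (3 * m) := by
    apply mem_pointIdeal_pow_lin
    rw [Mtau_mulVec_single]
    exact hφ5
  rw [pointIdeal_single] at hτ
  -- strip the four linear factors
  have hexpand : lin Mtau (crem F) =
      (∑ j, C (Mtau 0 j) * X j) ^ (6 * m) *
      ((∑ j, C (Mtau 1 j) * X j) ^ (6 * m) *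
      ((∑ j, C (Mtau 2 j) * X j) ^ (3 * m) *
      ((∑ j, C (Mtau 3 j) * X j) ^ (3 * m) * lin Mtau F'))) := by
    rw [hprod, map_mul, hWdef, map_mul, map_mul, map_mul, map_pow, map_pow, map_pow, map_pow,
      lin_X, lin_X, lin_X, lin_X]
    ring
  rw [hexpand] at hτ
  have hs0 : (Mtau : Matrix (Fin 4) (Fin 4) k) 0 0 ≠ 0 := by rw [Mtau_col0]; exact one_ne_zero
  have hs1 : (Mtau : Matrix (Fin 4) (Fin 4) k) 1 0 ≠ 0 := by rw [Mtau_col0]; exact one_ne_zero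
  have hs2 : (Mtau : Matrix (Fin 4) (Fin 4) k) 2 0 ≠ 0 := by rw [Mtau_col0]; exact one_ne_zero
  have hs3 : (Mtau : Matrix (Fin 4) (Fin 4) k) 3 0 ≠ 0 := by rw [Mtau_col0]; exact one_ne_zero
  have hτF' : lin Mtau F' ∈ (V k 0) ^ (3 * m) :=
    strip_pow hs3 (strip_pow hs2 (strip_pow hs1 (strip_pow hs0 hτ)))
  -- but lin Mtau F' is homogeneous of degree 3m - 3 < 3m, so it is zero
  have hτF'homog : (lin Mtau F').IsHomogeneous (3 * m - 3) := by
    have := isHomog_aeval (fun i => lin_homog Mtau i) hF'homog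
    rw [one_mul] at this
    exact this
  have hτF'0 : lin Mtau F' = 0 := by
    rw [← MvPolynomial.support_eq_empty]
    rw [Finset.eq_empty_iff_forall_notMem]
    intro e he
    have hwt := mem_V_pow.1 hτF' e he
    rw [wt_eq_0] at hwt
    have hsum : e 0 + e 1 + e 2 + e 3 = 3 * m - 3 := by
      have := homog_supp_sum hτF'homog he
      rw [sum_univ_eq] at this; exact this
    omega
  have hF'0 : F' = 0 := by
    have := lin_lin MtauInv Mtau F'
    rw [hτF'0, map_zero, Mtau_mul_inv, lin_one] at this
    exact this.symm
  have hcrem0 : crem F = 0 := by rw [hprod, hF'0, mul_zero]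
  have hcc := crem_crem hdeg
  rw [hcrem0, map_zero] at hcc
  have hnz : ((X 0 * X 1 * X 2 * X 3 : MvPolynomial (Fin 4) k) ^ 2) ^ (7 * m - 1) ≠ 0 := by
    apply pow_ne_zero
    apply pow_ne_zero
    exact mul_ne_zero (mul_ne_zero (mul_ne_zero (X_ne_zero _) (X_ne_zero _)) (X_ne_zero _))
      (X_ne_zero _)
  exact ((mul_eq_zero.1 hcc.symm).resolve_left hnz)

end St14

namespace St14
variable {k : Type*} [Field k]

/-- the standard configuration: 4 coordinate points and the all-ones point -/
noncomputable def stdCfg (k : Type*) [Field k] : Fin 5 → Fin 4 → k :=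
  ![Pi.single 0 1, Pi.single 1 1, Pi.single 2 1, Pi.single 3 1, fun _ => 1]

def colIdx (l : Fin 4) (b : Fin 4) : Fin 5 := if b = l then 4 else b.castSucc

/-- the polynomial in the coordinates of the 5 points cutting out the generic locus -/
noncomputable def Delta (k : Type*) [Field k] : MvPolynomial (Fin 5 × Fin 4) k :=
  (Matrix.of fun a b : Fin 4 => X ((Fin.castSucc b : Fin 5), a)).det *
  ∏ l : Fin 4, (Matrix.of fun a b : Fin 4 => X (colIdx l b, a)).det

/-- the matrix whose columns are the first four points -/
noncomputable def Amat (p : Fin 5 → Fin 4 → k) : Matrix (Fin 4) (Fin 4) k :=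
  Matrix.of fun a b : Fin 4 => p (Fin.castSucc b) a

lemma eval_Delta (p : Fin 5 → Fin 4 → k) :
    eval (fun q : Fin 5 × Fin 4 => p q.1 q.2) (Delta k) =
    (Amat p).det * ∏ l : Fin 4, ((Amat p).updateCol l (p 4)).det := by
  rw [Delta, map_mul, map_prod]
  congr 1
  · rw [RingHom.map_det (eval fun q : Fin 5 × Fin 4 => p q.1 q.2)]
    congr 1
    ext a b
    simp [Amat]
  · refine Finset.prod_congr rfl fun l _ => ?_
    rw [RingHom.map_det (eval fun q : Fin 5 × Fin 4 => p q.1 q.2)]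
    congr 1
    ext a b
    simp only [Matrix.map_apply, Matrix.of_apply, eval_X, Matrix.updateCol_apply, Amat,
      colIdx]
    by_cases hb : b = l <;> simp [hb]

lemma stdCfg_castSucc : ∀ b : Fin 4, stdCfg k (Fin.castSucc b) = Pi.single b 1 := by
  intro b; fin_cases b <;> rfl

lemma Amat_std : Amat (stdCfg k) = 1 := by
  ext a b
  rw [show Amat (stdCfg k) a b = stdCfg k (Fin.castSucc b) a from rfl, stdCfg_castSucc b,
    Matrix.one_apply, Pi.single_apply]

lemma eval_Delta_std : eval (fun q : Fin 5 × Fin 4 => stdCfg k q.1 q.2) (Delta k) ≠ 0 := by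
  rw [eval_Delta, Amat_std]
  have hones : (stdCfg k 4) = fun _ : Fin 4 => (1 : k) := rfl
  have h0 : ((1 : Matrix (Fin 4) (Fin 4) k)).updateCol 0 (stdCfg k 4)
      = !![1,0,0,0; 1,1,0,0; 1,0,1,0; 1,0,0,1] := by
    ext a b
    fin_cases a <;> fin_cases b <;>
      simp [Matrix.updateCol_apply, Matrix.one_apply, hones, Matrix.vecHead,
        Matrix.vecTail]
  have h1 : ((1 : Matrix (Fin 4) (Fin 4) k)).updateCol 1 (stdCfg k 4)
      = !![1,1,0,0; 0,1,0,0; 0,1,1,0; 0,1,0,1] := by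
    ext a b
    fin_cases a <;> fin_cases b <;>
      simp [Matrix.updateCol_apply, Matrix.one_apply, hones, Matrix.vecHead,
        Matrix.vecTail]
  have h2 : ((1 : Matrix (Fin 4) (Fin 4) k)).updateCol 2 (stdCfg k 4)
      = !![1,0,1,0; 0,1,1,0; 0,0,1,0; 0,0,1,1] := by
    ext a b
    fin_cases a <;> fin_cases b <;>
      simp [Matrix.updateCol_apply, Matrix.one_apply, hones, Matrix.vecHead,
        Matrix.vecTail]
  have h3 : ((1 : Matrix (Fin 4) (Fin 4) k)).updateCol 3 (stdCfg k 4)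
      = !![1,0,0,1; 0,1,0,1; 0,0,1,1; 0,0,0,1] := by
    ext a b
    fin_cases a <;> fin_cases b <;>
      simp [Matrix.updateCol_apply, Matrix.one_apply, hones, Matrix.vecHead,
        Matrix.vecTail]
  rw [Matrix.det_one, one_mul, Fin.prod_univ_four, h0, h1, h2, h3]
  simp [Matrix.det_succ_row_zero, Fin.sum_univ_succ]

/-- from nonvanishing of `Delta` construct the linear change of coordinates -/
lemma transport (p : Fin 5 → Fin 4 → k)
    (hΔ : eval (fun q : Fin 5 × Fin 4 => p q.1 q.2) (Delta k) ≠ 0) :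
    ∃ M : Matrix (Fin 4) (Fin 4) k,
      (∀ f : MvPolynomial (Fin 4) k, f ≠ 0 → lin M f ≠ 0) ∧
      ∀ j : Fin 5, pointIdeal (M.mulVec (stdCfg k j)) = pointIdeal (p j) := by
  rw [eval_Delta] at hΔ
  have hA : (Amat p).det ≠ 0 := fun h => hΔ (by rw [h, zero_mul])
  have hc : ∀ l : Fin 4, (Amat p).cramer (p 4) l ≠ 0 := by
    intro l hl
    rw [Matrix.cramer_apply] at hl
    apply hΔ
    rw [Finset.prod_eq_zero (Finset.mem_univ l) hl, mul_zero]
  set A := Amat p with hAdef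
  set c := A.cramer (p 4) with hcdef
  refine ⟨A * Matrix.diagonal c, ?_, ?_⟩
  · -- injectivity
    have hdet : IsUnit (A * Matrix.diagonal c).det := by
      rw [Matrix.det_mul, Matrix.det_diagonal]
      exact (isUnit_iff_ne_zero).2 (mul_ne_zero hA (Finset.prod_ne_zero_iff.2 fun l _ => hc l))
    intro f hf h0
    apply hf
    have := lin_lin ((A * Matrix.diagonal c)⁻¹) (A * Matrix.diagonal c) f
    rw [h0, map_zero, Matrix.mul_nonsing_inv _ hdet, lin_one] at this
    exact this.symm
  · intro j
    have hmv : ∀ j : Fin 4, (A * Matrix.diagonal c).mulVec (Pi.single j 1)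
        = fun i => c j * p (Fin.castSucc j) i := by
      intro j
      funext i
      rw [Matrix.mulVec_single_one, Matrix.col_apply]
      simp only [Matrix.mul_apply, Matrix.diagonal_apply, Finset.sum_ite_eq,
        Finset.mem_univ, if_true, mul_one]
      rw [Finset.sum_eq_single j]
      · rw [if_pos rfl]; rw [hAdef]; simp [Amat]; ring
      · intro b _ hb; rw [if_neg hb, mul_zero]
      · intro hj; exact absurd (Finset.mem_univ j) hj
    have hmv4 : (A * Matrix.diagonal c).mulVec (fun _ => 1)
        = fun i => A.det * p 4 i := by
      have h1 : (Matrix.diagonal c).mulVec (fun _ => 1) = c := by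
        funext i
        simp [Matrix.mulVec, dotProduct, Matrix.diagonal_apply,
          Finset.sum_ite_eq, Finset.mem_univ]
      rw [← Matrix.mulVec_mulVec, h1, hcdef, Matrix.mulVec_cramer]
      rfl
    fin_cases j
    · show pointIdeal ((A * Matrix.diagonal c).mulVec (Pi.single 0 1)) = pointIdeal (p 0)
      rw [hmv 0]
      exact pointIdeal_smul (hc 0) _
    · show pointIdeal ((A * Matrix.diagonal c).mulVec (Pi.single 1 1)) = pointIdeal (p 1)
      rw [hmv 1]
      exact pointIdeal_smul (hc 1) _
    · show pointIdeal ((A * Matrix.diagonal c).mulVec (Pi.single 2 1)) = pointIdeal (p 2)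
      rw [hmv 2]
      exact pointIdeal_smul (hc 2) _
    · show pointIdeal ((A * Matrix.diagonal c).mulVec (Pi.single 3 1)) = pointIdeal (p 3)
      rw [hmv 3]
      exact pointIdeal_smul (hc 3) _
    · show pointIdeal ((A * Matrix.diagonal c).mulVec (fun _ => 1)) = pointIdeal (p 4)
      rw [hmv4]
      exact pointIdeal_smul hA _

end St14

namespace St14
variable {k : Type*} [Field k]

lemma exists_linear {q : Fin 4 → k} (hq : q ≠ 0) :
    ∃ ℓ : MvPolynomial (Fin 4) k, ℓ.IsHomogeneous 1 ∧ ℓ ≠ 0 ∧ eval q ℓ = 0 := by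
  obtain ⟨i0, hi0⟩ := Function.ne_iff.1 hq
  simp only [Pi.zero_apply] at hi0
  set i1 : Fin 4 := if i0 = 0 then 1 else 0 with hi1def
  have hne : i1 ≠ i0 := by
    rw [hi1def]
    by_cases h : i0 = 0
    · rw [if_pos h, h]; decide
    · rw [if_neg h]; exact fun hc => h hc.symm
  refine ⟨C (q i0) * X i1 - C (q i1) * X i0, ?_, ?_, ?_⟩
  · apply IsHomogeneous.sub
    · have := (isHomogeneous_C (σ := Fin 4) (q i0)).mul (isHomogeneous_X k i1)
      simpa using this
    · have := (isHomogeneous_C (σ := Fin 4) (q i1)).mul (isHomogeneous_X k i0)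
      simpa using this
  · intro hc
    have hcoeff := congrArg (coeff (Finsupp.single i1 1)) hc
    rw [coeff_sub, coeff_C_mul, coeff_C_mul, coeff_X', coeff_X'] at hcoeff
    rw [if_pos rfl, if_neg (by
      intro h
      exact hne (by
        have := Finsupp.single_left_injective (one_ne_zero (α := ℕ)) h
        exact this.symm))] at hcoeff
    simp at hcoeff
    exact hi0 hcoeff
  · simp [mul_comm]

lemma fat_mem_iff {p : Fin 5 → Fin 4 → k} {ms : Fin 5 → ℕ} {f : MvPolynomial (Fin 4) k} :
    f ∈ fatIdeal p ms ↔ ∀ j, f ∈ pointIdeal (p j) ^ ms j := by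
  rw [fatIdeal, Ideal.mem_iInf]

lemma fat_nonempty (p : Fin 5 → Fin 4 → k) (hp : ∀ j, p j ≠ 0) (ms : Fin 5 → ℕ) :
    ∃ f ∈ fatIdeal p ms, f ≠ 0 ∧ f.IsHomogeneous (∑ j, ms j) := by
  have hl : ∀ j : Fin 5, ∃ ℓ : MvPolynomial (Fin 4) k,
      ℓ.IsHomogeneous 1 ∧ ℓ ≠ 0 ∧ eval (p j) ℓ = 0 := fun j => exists_linear (hp j)
  choose ℓ hh hn he using hl
  refine ⟨∏ j, ℓ j ^ ms j, ?_, ?_, ?_⟩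
  · rw [fat_mem_iff]
    intro j
    rw [← Finset.mul_prod_erase Finset.univ _ (Finset.mem_univ j)]
    refine Ideal.mul_mem_right _ _ (Ideal.pow_mem_pow ?_ _)
    exact Ideal.subset_span ⟨⟨1, hh j⟩, he j⟩
  · rw [Finset.prod_ne_zero_iff]
    exact fun j _ => pow_ne_zero _ (hn j)
  · have := IsHomogeneous.prod Finset.univ (fun j => ℓ j ^ ms j) (fun j => 1 * ms j)
      (fun j _ => (hh j).pow (ms j))
    simpa using this

lemma no_form_at (p : Fin 5 → Fin 4 → k)
    (hΔ : eval (fun q : Fin 5 × Fin 4 => p q.1 q.2) (Delta k) ≠ 0)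
    (m : ℕ) (hm : 1 ≤ m) (F : MvPolynomial (Fin 4) k)
    (hmem : F ∈ fatIdeal p ![6 * m, 6 * m, 3 * m, 3 * m, 3 * m])
    (hne : F ≠ 0) (hhom : F.IsHomogeneous (7 * m - 1)) : False := by
  obtain ⟨M, hinj, hpt⟩ := transport p hΔ
  rw [fat_mem_iff] at hmem
  have hGhom : (lin M F).IsHomogeneous (7 * m - 1) := by
    have := isHomog_aeval (fun i => lin_homog M i) hhom
    rw [one_mul] at this
    exact this
  have hGj : ∀ j : Fin 5, lin M F ∈ pointIdeal (stdCfg k j) ^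
      (![6 * m, 6 * m, 3 * m, 3 * m, 3 * m] j) := by
    intro j
    have h := hmem j
    rw [← hpt j] at h
    exact mem_pointIdeal_pow_lin h
  have hG0 := hGj 0
  have hG1 := hGj 1
  have hG2 := hGj 2
  have hG3 := hGj 3
  have hG4 := hGj 4
  exact hinj F hne (core m hm (lin M F) hGhom hG0 hG1 hG2 hG3 hG4)

lemma vec_eq (m : ℕ) : (fun j : Fin 5 => 3 * m * (![2, 2, 1, 1, 1] : Fin 5 → ℕ) j)
    = ![6 * m, 6 * m, 3 * m, 3 * m, 3 * m] := by
  funext j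
  fin_cases j <;> · show 3 * m * _ = _; norm_num; try ring

lemma alpha_ge (p : Fin 5 → Fin 4 → k) (hp : ∀ j, p j ≠ 0)
    (hΔ : eval (fun q : Fin 5 × Fin 4 => p q.1 q.2) (Delta k) ≠ 0)
    (m : ℕ) (hm : 1 ≤ m) :
    7 * m ≤ alpha (fatIdeal p fun j => 3 * m * (![2, 2, 1, 1, 1] : Fin 5 → ℕ) j) := by
  rw [vec_eq m]
  rw [alpha]
  set I := fatIdeal p ![6 * m, 6 * m, 3 * m, 3 * m, 3 * m] with hI
  obtain ⟨f0, hf0I, hf0ne, hf0hom⟩ := fat_nonempty p hp ![6 * m, 6 * m, 3 * m, 3 * m, 3 * m]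
  apply le_csInf
  · exact ⟨∑ j, (![6 * m, 6 * m, 3 * m, 3 * m, 3 * m] : Fin 5 → ℕ) j,
      f0, hf0I, hf0ne, hf0hom⟩
  rintro b ⟨f, hfI, hfne, hfhom⟩
  by_contra hlt
  push_neg at hlt
  have hb : b ≤ 7 * m - 1 := by omega
  set g := f * X 0 ^ (7 * m - 1 - b) with hg
  apply no_form_at p hΔ m hm g (Ideal.mul_mem_right _ _ hfI)
    (mul_ne_zero hfne (pow_ne_zero _ (X_ne_zero 0)))
  have := hfhom.mul ((isHomogeneous_X k 0).pow (7 * m - 1 - b))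
  rw [one_mul] at this
  have harith : b + (7 * m - 1 - b) = 7 * m - 1 := by omega
  rw [harith] at this
  exact this

end St14

open St14

/-- For `5` points in general position in `ℙ³`, `γ(I(2,2,1,1,1)) ≥ 7/3`; in fact
`I(6m,6m,3m,3m,3m)` contains no nonzero form of degree `7m - 1` for any `m ≥ 1`. -/
theorem statement14 (k : Type*) [Field k] [CharZero k] :
    Generic k 3 5 (fun p =>
      (∀ γ : ℝ, Tendsto (alphaSeq p ![2, 2, 1, 1, 1]) atTop (nhds γ) → 7 / 3 ≤ γ) ∧
      ∀ m : ℕ, 1 ≤ m →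
        ¬ ∃ f ∈ fatIdeal p ![6 * m, 6 * m, 3 * m, 3 * m, 3 * m],
            f ≠ 0 ∧ f.IsHomogeneous (7 * m - 1)) := by
  refine ⟨{Delta k}, ⟨stdCfg k, ?_, ⟨Delta k, rfl, eval_Delta_std⟩⟩, ?_⟩
  · intro j
    fin_cases j
    · show (Pi.single 0 1 : Fin 4 → k) ≠ 0
      intro h
      have := congrFun h 0
      rw [Pi.single_eq_same, Pi.zero_apply] at this
      exact one_ne_zero (α := k) this
    · show (Pi.single 1 1 : Fin 4 → k) ≠ 0
      intro h
      have := congrFun h 1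
      rw [Pi.single_eq_same, Pi.zero_apply] at this
      exact one_ne_zero (α := k) this
    · show (Pi.single 2 1 : Fin 4 → k) ≠ 0
      intro h
      have := congrFun h 2
      rw [Pi.single_eq_same, Pi.zero_apply] at this
      exact one_ne_zero (α := k) this
    · show (Pi.single 3 1 : Fin 4 → k) ≠ 0
      intro h
      have := congrFun h 3
      rw [Pi.single_eq_same, Pi.zero_apply] at this
      exact one_ne_zero (α := k) this
    · show (fun _ : Fin 4 => (1 : k)) ≠ 0
      intro h
      exact one_ne_zero (α := k) (congrFun h 0)
  · rintro p hp ⟨f, hfS, hfne⟩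
    rw [Set.mem_singleton_iff] at hfS
    subst hfS
    constructor
    · -- the Waldschmidt bound
      intro γ hγ
      have h3 : Tendsto (fun m : ℕ => 3 * m) atTop atTop := by
        apply Filter.tendsto_atTop_atTop.2
        intro b
        exact ⟨b, fun a ha => by omega⟩
      have hsub : Tendsto (fun m : ℕ => alphaSeq p ![2, 2, 1, 1, 1] (3 * m)) atTop (nhds γ) :=
        hγ.comp h3
      refine ge_of_tendsto hsub ?_
      rw [Filter.eventually_atTop]
      refine ⟨1, fun m hm => ?_⟩
      have hα := alpha_ge p hp hfne m hm
      rw [alphaSeq]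
      have hmpos : (0 : ℝ) < (3 * m : ℕ) := by
        have : (1 : ℕ) ≤ 3 * m := by omega
        exact_mod_cast Nat.lt_of_lt_of_le Nat.zero_lt_one this
      rw [div_le_div_iff₀ (by norm_num) hmpos]
      have hcast : (7 * m : ℝ) ≤ (alpha (fatIdeal p fun j => 3 * m * (![2, 2, 1, 1, 1] :
          Fin 5 → ℕ) j) : ℝ) := by exact_mod_cast hα
      push_cast at hcast ⊢
      nlinarith
    · -- the nonexistence statement
      rintro m hm ⟨F, hmem, hne, hhom⟩
      exact no_form_at p hfne m hm F hmem hne hhom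
end

section
/- Let N ≥ 2 and 1 ≤ n ≤ N+1, and let p_1,…,p_n be the first n fundamental points of P^N, i.e., p_j is the point whose j-th homogeneous coordinate is 1 and all others are 0. Then the radical ideal I = ∩_{j=1}^n m_{p_j} ⊆ k[P^N] satisfies I^(Nr) ⊆ M^{(N-1)r}·I^r for all integers r ≥ 1. -/
open MvPolynomial Filter

open Pointwise

namespace Stmt19Aux

variable {k : Type*} [Field k]

section GenSigma

variable {σ : Type*} [Fintype σ] [DecidableEq σ]

lemma sum_single_apply (a : σ) (t : ℕ) : (∑ l, Finsupp.single a t l) = t := by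
  simp [Finsupp.single_apply]

lemma sum_sub_add (w y : σ →₀ ℕ) (h : ∀ a, y a ≤ w a) :
    (∑ l, (w - y) l) + ∑ l, y l = ∑ l, w l := by
  rw [← Finset.sum_add_distrib]
  refine Finset.sum_congr rfl fun a _ => ?_
  rw [Finsupp.tsub_apply]
  have := h a
  omega

lemma monomial_split (w y : σ →₀ ℕ) (h : ∀ a, y a ≤ w a) :
    monomial w (1:k) = monomial (w - y) 1 * monomial y 1 := by
  rw [monomial_mul, one_mul]
  have hw : w - y + y = w := by
    ext a
    rw [Finsupp.add_apply, Finsupp.tsub_apply]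
    have := h a
    omega
  rw [hw]

lemma eval_single_eq_coeff (i : σ) {f : MvPolynomial σ k} {d : ℕ}
    (hf : f.IsHomogeneous d) :
    eval (Pi.single i (1:k)) f = coeff (Finsupp.single i d) f := by
  rw [eval_eq']
  rw [Finset.sum_eq_single (Finsupp.single i d)]
  · have h1 : ∀ l ∈ Finset.univ, ((Pi.single i (1:k) : σ → k) l) ^ ((Finsupp.single i d) l) = (1:k) := by
      intro l _
      rcases eq_or_ne l i with rfl | h
      · simp
      · rw [Finsupp.single_apply, if_neg (fun he => h he.symm), pow_zero]
    rw [Finset.prod_eq_one h1, mul_one]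
  · intro bb hb hne
    have hdeg : bb.degree = d := by
      by_contra h
      exact (mem_support_iff.mp hb) (hf.coeff_eq_zero h)
    have hex : ∃ l, l ≠ i ∧ bb l ≠ 0 := by
      by_contra h
      push_neg at h
      apply hne
      have hsum : (∑ l, bb l) = bb i :=
        Finset.sum_eq_single i (fun l _ hl => h l hl) (fun h' => absurd (Finset.mem_univ i) h')
      have hdeg' : bb.degree = ∑ l, bb l :=
        Finset.sum_subset (Finset.subset_univ _) fun a _ ha => Finsupp.notMem_support_iff.mp ha
      ext l
      rcases eq_or_ne l i with rfl | hl
      · rw [Finsupp.single_eq_same]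
        omega
      · rw [h l hl, Finsupp.single_apply, if_neg (fun he => hl he.symm)]
    obtain ⟨l, hl, hbl⟩ := hex
    have hz : ((Pi.single i (1:k) : σ → k) l) ^ (bb l) = (0:k) := by
      rw [Pi.single_eq_of_ne hl, zero_pow hbl]
    rw [Finset.prod_eq_zero (Finset.mem_univ l) hz, mul_zero]
  · intro h
    rw [notMem_support_iff.mp h, zero_mul]

lemma X_mem_pointIdeal {i l : σ} (h : l ≠ i) :
    (X l : MvPolynomial σ k) ∈ pointIdeal (Pi.single i (1:k)) :=
  Ideal.subset_span ⟨⟨1, isHomogeneous_X _ _⟩, by rw [eval_X, Pi.single_eq_of_ne h]⟩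

lemma pointIdeal_single_le (i : σ) :
    pointIdeal (Pi.single i (1:k)) ≤ Ideal.span (X '' {l | l ≠ i}) := by
  rw [pointIdeal, Ideal.span_le]
  rintro f ⟨⟨d, hfd⟩, hev⟩
  rw [SetLike.mem_coe, mem_ideal_span_X_image]
  intro m hm
  by_contra hcon
  push_neg at hcon
  have hm0 : ∀ l, l ≠ i → m l = 0 := fun l hl => hcon l hl
  have hdeg : m.degree = d := by
    by_contra h
    exact (mem_support_iff.mp hm) (hfd.coeff_eq_zero h)
  have hmi : m = Finsupp.single i d := by
    have hsum : (∑ l, m l) = m i :=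
      Finset.sum_eq_single i (fun l _ hl => hm0 l hl) (fun h' => absurd (Finset.mem_univ i) h')
    have hdeg' : m.degree = ∑ l, m l :=
      Finset.sum_subset (Finset.subset_univ _) fun a _ ha => Finsupp.notMem_support_iff.mp ha
    ext l
    rcases eq_or_ne l i with rfl | hl
    · rw [Finsupp.single_eq_same]; omega
    · rw [hm0 l hl, Finsupp.single_apply, if_neg (fun he => hl he.symm)]
  have hco := eval_single_eq_coeff i hfd
  rw [hev] at hco
  exact (mem_support_iff.mp hm) (by rw [hmi, ← hco])

lemma span_X_pow_le (i : σ) (m : ℕ) :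
    (Ideal.span (X '' {l | l ≠ i}) : Ideal (MvPolynomial σ k)) ^ m ≤
      Ideal.span ((fun s => monomial s (1:k)) '' {s | s i = 0 ∧ (∑ l, s l) = m}) := by
  induction m with
  | zero =>
    have h1 : (1 : MvPolynomial σ k) ∈
        Ideal.span ((fun s => monomial s (1:k)) '' {s : σ →₀ ℕ | s i = 0 ∧ (∑ l, s l) = 0}) := by
      apply Ideal.subset_span
      exact ⟨0, ⟨rfl, by simp⟩, by simp [monomial_zero']⟩
    rw [pow_zero, Ideal.one_eq_top]
    exact le_of_eq ((Ideal.eq_top_iff_one _).mpr h1).symm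
  | succ m ih =>
    rw [pow_succ]
    have hbase : Ideal.span (X '' {l | l ≠ i}) ≤
        Ideal.span ((fun s => monomial s (1:k)) '' {s : σ →₀ ℕ | s i = 0 ∧ (∑ l, s l) = 1}) := by
      rw [Ideal.span_le]
      rintro _ ⟨l, hl, rfl⟩
      apply Ideal.subset_span
      refine ⟨Finsupp.single l 1, ⟨?_, sum_single_apply l 1⟩, rfl⟩
      rw [Finsupp.single_apply, if_neg (fun he : l = i => hl he)]
    calc (Ideal.span (X '' {l | l ≠ i}))^m * Ideal.span (X '' {l | l ≠ i})
        ≤ Ideal.span ((fun s => monomial s (1:k)) '' {s : σ →₀ ℕ | s i = 0 ∧ (∑ l, s l) = m}) *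
          Ideal.span ((fun s => monomial s (1:k)) '' {s : σ →₀ ℕ | s i = 0 ∧ (∑ l, s l) = 1}) :=
          Ideal.mul_mono ih hbase
      _ = Ideal.span (((fun s => monomial s (1:k)) '' {s : σ →₀ ℕ | s i = 0 ∧ (∑ l, s l) = m}) *
          ((fun s => monomial s (1:k)) '' {s : σ →₀ ℕ | s i = 0 ∧ (∑ l, s l) = 1})) :=
          Ideal.span_mul_span' _ _
      _ ≤ Ideal.span ((fun s => monomial s (1:k)) ''
            {s : σ →₀ ℕ | s i = 0 ∧ (∑ l, s l) = m + 1}) := by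
          apply Ideal.span_mono
          rintro z hz
          rw [Set.mem_mul] at hz
          obtain ⟨z1, hz1, z2, hz2, rfl⟩ := hz
          obtain ⟨s, ⟨hsi, hss⟩, rfl⟩ := hz1
          obtain ⟨u, ⟨hui, huu⟩, rfl⟩ := hz2
          refine ⟨s + u, ⟨?_, ?_⟩, ?_⟩
          · rw [Finsupp.add_apply, hsi, hui]
          · rw [Finset.sum_congr rfl (fun a _ => Finsupp.add_apply s u a),
              Finset.sum_add_distrib, hss, huu]
          · rw [monomial_mul, one_mul]

lemma mem_pow_single_support {i : σ} {m : ℕ} {f : MvPolynomial σ k}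
    (hf : f ∈ pointIdeal (Pi.single i (1:k)) ^ m) :
    ∀ x ∈ f.support, m + x i ≤ ∑ l, x l := by
  have h2 := span_X_pow_le (k := k) i m (Ideal.pow_right_mono (pointIdeal_single_le i) m hf)
  rw [mem_ideal_span_monomial_image] at h2
  intro x hx
  obtain ⟨s, ⟨hsi, hsum⟩, hle⟩ := h2 x hx
  have hle' : ∀ a, s a ≤ x a := Finsupp.le_def.mp hle
  have h1 : (∑ l ∈ Finset.univ.erase i, s l) + s i = ∑ l, s l :=
    Finset.sum_erase_add _ _ (Finset.mem_univ i)
  have h2' : (∑ l ∈ Finset.univ.erase i, x l) + x i = ∑ l, x l :=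
    Finset.sum_erase_add _ _ (Finset.mem_univ i)
  have h3 : (∑ l ∈ Finset.univ.erase i, s l) ≤ ∑ l ∈ Finset.univ.erase i, x l :=
    Finset.sum_le_sum fun a _ => hle' a
  omega

lemma monomial_mem_span_range_X_pow (t : ℕ) :
    ∀ w : σ →₀ ℕ, t ≤ ∑ l, w l →
      monomial w (1:k) ∈ (Ideal.span (Set.range X) : Ideal (MvPolynomial σ k)) ^ t := by
  induction t with
  | zero => intro w _; rw [pow_zero, Ideal.one_eq_top]; exact Submodule.mem_top
  | succ t ih =>
    intro w hw
    obtain ⟨l, hl⟩ : ∃ l, w l ≠ 0 := by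
      by_contra h; push_neg at h
      rw [Finset.sum_eq_zero (fun a _ => h a)] at hw; omega
    have hle : ∀ a, (Finsupp.single l 1) a ≤ w a := by
      intro a
      rcases eq_or_ne a l with rfl | h
      · rw [Finsupp.single_eq_same]; omega
      · rw [Finsupp.single_apply, if_neg (fun he => h he.symm)]; omega
    rw [monomial_split w (Finsupp.single l 1) hle, pow_succ]
    refine Ideal.mul_mem_mul (ih _ ?_) (Ideal.subset_span ⟨l, rfl⟩)
    have h2 := sum_sub_add w (Finsupp.single l 1) hle
    rw [sum_single_apply] at h2
    omega

lemma helperA (J : Ideal (MvPolynomial σ k)) (P : σ → Prop) (hJ : ∀ l, P l → X l ∈ J)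
    (x : σ →₀ ℕ) (hx : ∀ l, x l ≠ 0 → P l) :
    ∀ t, t ≤ ∑ l, x l →
      ∃ y : σ →₀ ℕ, (∀ a, y a ≤ x a) ∧ (∑ l, y l) = t ∧ monomial y (1:k) ∈ J ^ t := by
  intro t
  induction t with
  | zero =>
    intro _
    refine ⟨0, fun a => Nat.zero_le _, by simp, ?_⟩
    rw [pow_zero, Ideal.one_eq_top]; exact Submodule.mem_top
  | succ t ih =>
    intro ht
    obtain ⟨y, hy, hsum, hmem⟩ := ih (by omega)
    obtain ⟨l, hl⟩ : ∃ l, y l < x l := by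
      by_contra h; push_neg at h
      have h2 := Finset.sum_le_sum (s := Finset.univ) (fun a _ => h a)
      omega
    refine ⟨y + Finsupp.single l 1, ?_, ?_, ?_⟩
    · intro a
      rw [Finsupp.add_apply, Finsupp.single_apply]
      rcases eq_or_ne l a with rfl | hne
      · rw [if_pos rfl]; have := hy l; omega
      · rw [if_neg hne]; have := hy a; omega
    · rw [Finset.sum_congr rfl (fun a _ => Finsupp.add_apply y (Finsupp.single l 1) a),
        Finset.sum_add_distrib, sum_single_apply, hsum]
    · have heq : monomial (y + Finsupp.single l 1) (1:k) = monomial y 1 * X l := by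
        rw [show (X l : MvPolynomial σ k) = monomial (Finsupp.single l 1) 1 from rfl,
          monomial_mul, one_mul]
      rw [heq, pow_succ]
      exact Ideal.mul_mem_mul hmem (hJ l (hx l (by omega)))

lemma helperB (J : Ideal (MvPolynomial σ k))
    (hJ : ∀ a b : σ, a ≠ b → (X a * X b : MvPolynomial σ k) ∈ J) :
    ∀ t (x : σ →₀ ℕ), 2 * t ≤ ∑ l, x l → (∀ l, x l + t ≤ ∑ l, x l) →
      ∃ y : σ →₀ ℕ, (∀ a, y a ≤ x a) ∧ (∑ l, y l) = 2 * t ∧ monomial y (1:k) ∈ J ^ t := by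
  intro t
  induction t with
  | zero =>
    intro x _ _
    exact ⟨0, fun a => Nat.zero_le _, by simp, by
      rw [pow_zero, Ideal.one_eq_top]; exact Submodule.mem_top⟩
  | succ t ih =>
    intro x h2t hmax
    have huniv : (Finset.univ : Finset σ).Nonempty := by
      by_contra h
      rw [Finset.not_nonempty_iff_eq_empty] at h
      rw [h, Finset.sum_empty] at h2t; omega
    obtain ⟨a, _, ha⟩ := Finset.exists_max_image Finset.univ x huniv
    have hera : (∑ l ∈ Finset.univ.erase a, x l) + x a = ∑ l, x l :=
      Finset.sum_erase_add _ _ (Finset.mem_univ a)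
    have herpos : 0 < ∑ l ∈ Finset.univ.erase a, x l := by
      have := hmax a; omega
    have herne : ∃ l ∈ Finset.univ.erase a, x l ≠ 0 := by
      by_contra h; push_neg at h
      rw [Finset.sum_eq_zero h] at herpos
      omega
    obtain ⟨w, hwmem, hwne⟩ := herne
    obtain ⟨b, hbmem, hbmax⟩ := Finset.exists_max_image (Finset.univ.erase a) x ⟨w, hwmem⟩
    have hba : b ≠ a := (Finset.mem_erase.mp hbmem).1
    have hxb : 0 < x b := lt_of_lt_of_le (Nat.pos_of_ne_zero hwne) (hbmax w hwmem)
    have hxa : 0 < x a := lt_of_lt_of_le hxb (ha b (Finset.mem_univ b))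
    set y0 : σ →₀ ℕ := Finsupp.single a 1 + Finsupp.single b 1 with hy0def
    have hy0 : ∀ l, y0 l = (if a = l then 1 else 0) + (if b = l then 1 else 0) := by
      intro l
      rw [hy0def, Finsupp.add_apply, Finsupp.single_apply, Finsupp.single_apply]
    have hy0a : y0 a = 1 := by rw [hy0 a, if_pos rfl, if_neg (fun h => hba h)]
    have hy0b : y0 b = 1 := by
      rw [hy0 b, if_pos rfl, if_neg (fun h : a = b => hba h.symm)]
    have hy0other : ∀ l, l ≠ a → l ≠ b → y0 l = 0 := by
      intro l h1 h2
      rw [hy0 l, if_neg (fun h => h1 h.symm), if_neg (fun h => h2 h.symm)]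
    have hy0le : ∀ l, y0 l ≤ x l := by
      intro l
      rcases eq_or_ne l a with rfl | h1
      · rw [hy0a]; omega
      rcases eq_or_ne l b with rfl | h2
      · rw [hy0b]; omega
      · rw [hy0other l h1 h2]; omega
    have hsum0 : ∑ l, y0 l = 2 := by
      rw [Finset.sum_congr rfl (fun l _ =>
        Finsupp.add_apply (Finsupp.single a 1) (Finsupp.single b 1) l),
        Finset.sum_add_distrib, sum_single_apply, sum_single_apply]
    set x' := x - y0 with hx'def
    have hx'app : ∀ l, x' l = x l - y0 l := fun l => Finsupp.tsub_apply x y0 l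
    have hsx' : (∑ l, x' l) + 2 = ∑ l, x l := by
      have := sum_sub_add x y0 hy0le
      rw [hsum0] at this
      exact this
    have hprem1 : 2 * t ≤ ∑ l, x' l := by omega
    have hprem2 : ∀ l, x' l + t ≤ ∑ l, x' l := by
      intro l
      have happ := hx'app l
      rcases eq_or_ne l a with rfl | h1
      · rw [hy0a] at happ
        have := hmax l
        omega
      rcases eq_or_ne l b with rfl | h2
      · rw [hy0b] at happ
        have := hmax l
        omega
      · rw [hy0other l h1 h2] at happ
        have hla : x l ≤ x a := ha l (Finset.mem_univ l)
        have hlb : x l ≤ x b := hbmax l (Finset.mem_erase.mpr ⟨h1, Finset.mem_univ l⟩)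
        have h3 : x a + x b + x l ≤ ∑ m, x m := by
          have hcard : ∑ m ∈ ({a, b, l} : Finset σ), x m = x a + x b + x l := by
            rw [Finset.sum_insert (by simp [hba.symm, h1.symm]),
              Finset.sum_insert (by simp [h2.symm]), Finset.sum_singleton, add_assoc]
          rw [← hcard]
          exact Finset.sum_le_sum_of_subset (Finset.subset_univ _)
        omega
    obtain ⟨y', hy', hsum', hmem'⟩ := ih x' hprem1 hprem2
    refine ⟨y' + y0, ?_, ?_, ?_⟩
    · intro l
      rw [Finsupp.add_apply]
      have h1 := hy' l
      have h2 := hx'app l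
      have h3 := hy0le l
      omega
    · rw [Finset.sum_congr rfl (fun l _ => Finsupp.add_apply y' y0 l),
        Finset.sum_add_distrib, hsum', hsum0]
      ring
    · have heq : monomial (y' + y0) (1:k) = monomial y' 1 * (X a * X b) := by
        rw [show (X a : MvPolynomial σ k) = monomial (Finsupp.single a 1) 1 from rfl,
          show (X b : MvPolynomial σ k) = monomial (Finsupp.single b 1) 1 from rfl,
          monomial_mul, monomial_mul, one_mul, one_mul, hy0def]
      rw [heq, pow_succ]
      exact Ideal.mul_mem_mul hmem' (hJ a b (Ne.symm hba))

end GenSigma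

end Stmt19Aux

namespace Stmt19Aux

variable {k : Type*} [Field k]

lemma extract {N n : ℕ} (hN : 2 ≤ N) (hn1 : 1 ≤ n) (hn2 : n ≤ N + 1)
    (J : Ideal (MvPolynomial (Fin (N + 1)) k))
    (hJ1 : ∀ l : Fin (N + 1), n ≤ (l : ℕ) → X l ∈ J)
    (hJ2 : ∀ a b : Fin (N + 1), a ≠ b → (X a * X b : MvPolynomial (Fin (N+1)) k) ∈ J)
    (r : ℕ) (hr : 1 ≤ r) (x : Fin (N + 1) →₀ ℕ)
    (hx : ∀ l : Fin (N + 1), (l : ℕ) < n → N * r + x l ≤ ∑ i, x i) :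
    ∃ y : Fin (N + 1) →₀ ℕ, (∀ a, y a ≤ x a) ∧ (∑ i, y i) + (N - 1) * r ≤ ∑ i, x i ∧
      monomial y (1:k) ∈ J ^ r := by
  classical
  set d := ∑ i, x i with hd
  have hdNr : N * r ≤ d := by
    have := hx ⟨0, by omega⟩ (by simp; omega)
    omega
  have hNr2 : 2 * r ≤ N * r := Nat.mul_le_mul_right r hN
  have hNr1 : (N - 1) * r + r = N * r := by
    have h : N - 1 + 1 = N := by omega
    calc (N-1)*r + r = (N-1+1)*r := by rw [Nat.add_mul, one_mul]
    _ = N * r := by rw [h]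
  set xout := x.filter (fun l : Fin (N+1) => n ≤ (l : ℕ)) with hxout
  set xin := x.filter (fun l : Fin (N+1) => (l : ℕ) < n) with hxin
  have houtapp : ∀ l, xin l + xout l = x l := by
    intro l
    rcases lt_or_ge ((l:ℕ)) n with h | h
    · rw [hxin, hxout, Finsupp.filter_apply_pos (fun l : Fin (N+1) => (l:ℕ) < n) x h,
        Finsupp.filter_apply_neg (fun l : Fin (N+1) => n ≤ (l:ℕ)) x (by omega)]
      omega
    · rw [hxin, hxout, Finsupp.filter_apply_neg (fun l : Fin (N+1) => (l:ℕ) < n) x (by omega),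
        Finsupp.filter_apply_pos (fun l : Fin (N+1) => n ≤ (l:ℕ)) x h]
      omega
  have hxoutsup : ∀ l, xout l ≠ 0 → n ≤ (l:ℕ) := by
    intro l h
    by_contra hcon
    exact h (by rw [hxout, Finsupp.filter_apply_neg (fun l : Fin (N+1) => n ≤ (l:ℕ)) x hcon])
  set c := ∑ i, xout i with hc
  set b := ∑ i, xin i with hb
  have hbc : b + c = d := by
    rw [hb, hc, ← Finset.sum_add_distrib, hd]
    exact Finset.sum_congr rfl fun l _ => houtapp l
  rcases le_or_gt r c with hcase | hcase
  · obtain ⟨y, hy, hsum, hmem⟩ := helperA J (fun l => n ≤ (l:ℕ)) hJ1 xout hxoutsup r hcase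
    refine ⟨y, fun a => le_trans (hy a) (by have := houtapp a; omega), ?_, hmem⟩
    omega
  · set t := r - c with ht
    have hbprem1 : 2 * t ≤ b := by omega
    have hbprem2 : ∀ l, xin l + t ≤ b := by
      intro l
      rcases lt_or_ge ((l:ℕ)) n with h | h
      · have h1 := hx l h
        have h2 : xin l = x l := by rw [hxin, Finsupp.filter_apply_pos (fun l : Fin (N+1) => (l:ℕ) < n) x h]
        omega
      · have h2 : xin l = 0 := by rw [hxin, Finsupp.filter_apply_neg (fun l : Fin (N+1) => (l:ℕ) < n) x (by omega)]
        omega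
    obtain ⟨y1, hy1, hsum1, hmem1⟩ := helperB J hJ2 t xin hbprem1 hbprem2
    obtain ⟨y2, hy2, hsum2, hmem2⟩ := helperA J (fun l => n ≤ (l:ℕ)) hJ1 xout hxoutsup c (le_refl c)
    refine ⟨y1 + y2, ?_, ?_, ?_⟩
    · intro a
      rw [Finsupp.add_apply]
      have h1 := houtapp a
      have h2 := hy1 a
      have h3 := hy2 a
      omega
    · have hsy : ∑ i, (y1 + y2) i = 2*t + c := by
        rw [Finset.sum_congr rfl (fun a _ => Finsupp.add_apply y1 y2 a),
          Finset.sum_add_distrib, hsum1, hsum2]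
      have hn2' : 2 ≤ n := by
        by_contra h
        have hn1' : n = 1 := by omega
        have hbl0 : b = x ⟨0, by omega⟩ := by
          rw [hb, hxin]
          rw [Finset.sum_eq_single (⟨0, by omega⟩ : Fin (N+1))]
          · exact Finsupp.filter_apply_pos (fun l : Fin (N+1) => (l:ℕ) < n) x (by simp [hn1'])
          · intro l _ hl
            apply Finsupp.filter_apply_neg (fun l : Fin (N+1) => (l:ℕ) < n) x
            have hlv : (l:ℕ) ≠ 0 := fun hl0 => hl (Fin.ext hl0)
            omega
          · intro h'; exact absurd (Finset.mem_univ _) h'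
        have := hx ⟨0, by omega⟩ (by simp; omega)
        omega
      set T := Finset.univ.filter (fun l : Fin (N+1) => (l:ℕ) < n) with hT
      have hbT : b = ∑ l ∈ T, x l := by
        rw [hb, hT, Finset.sum_filter]
        refine Finset.sum_congr rfl fun l _ => ?_
        rcases lt_or_ge ((l:ℕ)) n with h | h
        · rw [hxin, Finsupp.filter_apply_pos (fun l : Fin (N+1) => (l:ℕ) < n) x h, if_pos h]
        · rw [hxin, Finsupp.filter_apply_neg (fun l : Fin (N+1) => (l:ℕ) < n) x (by omega), if_neg (by omega)]
      set m := T.card with hm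
      have hmle : m ≤ N + 1 := by
        calc m ≤ (Finset.univ : Finset (Fin (N+1))).card := Finset.card_filter_le _ _
        _ = N + 1 := by simp
      have hmge : 2 ≤ m := by
        have hsub : ({⟨0, by omega⟩, ⟨1, by omega⟩} : Finset (Fin (N+1))) ⊆ T := by
          intro l hl
          rw [hT, Finset.mem_filter]
          refine ⟨Finset.mem_univ _, ?_⟩
          simp only [Finset.mem_insert, Finset.mem_singleton] at hl
          rcases hl with rfl | rfl
          · simp; omega
          · simp; omega
        have hcard2 : ({⟨0, by omega⟩, ⟨1, by omega⟩} : Finset (Fin (N+1))).card = 2 := by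
          rw [Finset.card_insert_of_notMem (by
            simp only [Finset.mem_singleton]
            intro hcon
            have := congrArg Fin.val hcon
            simp at this), Finset.card_singleton]
        calc 2 = _ := hcard2.symm
        _ ≤ m := Finset.card_le_card hsub
      have hTsum : b + m * (N*r) ≤ m * d := by
        have h1 : ∀ l ∈ T, x l + N*r ≤ d := fun l hl => by
          have := hx l (by rw [hT] at hl; exact (Finset.mem_filter.mp hl).2)
          omega
        have h2 : ∑ l ∈ T, (x l + N*r) ≤ ∑ l ∈ T, d := Finset.sum_le_sum h1
        rw [Finset.sum_add_distrib, Finset.sum_const, Finset.sum_const, smul_eq_mul,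
          smul_eq_mul, ← hbT, ← hm] at h2
        exact h2
      set m' := m - 1 with hm'
      have hmm : m = m' + 1 := by omega
      have hmul1 : m * d = m' * d + d := by rw [hmm, Nat.add_mul, one_mul]
      have hstep1 : m * (N*r) ≤ m' * d + c := by omega
      have hstep2 : m' * ((N+1)*r) ≤ m * (N*r) := by
        have hmn : m' * (N+1) ≤ m * N := by
          have e1 : m' * (N+1) = m' * N + m' := by ring
          have e2 : m * N = m' * N + N := by rw [hmm]; ring
          omega
        calc m' * ((N+1)*r) = (m' * (N+1)) * r := by ring
        _ ≤ (m * N) * r := Nat.mul_le_mul_right r hmn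
        _ = m * (N*r) := by ring
      have hstep3 : m' * ((N+1)*r) ≤ m' * (d + c) := by
        have hcc : c ≤ m' * c := Nat.le_mul_of_pos_left c (by omega)
        have e3 : m' * (d + c) = m' * d + m' * c := by ring
        omega
      have hfinal : (N+1)*r ≤ d + c := Nat.le_of_mul_le_mul_left hstep3 (by omega)
      have hN1r : (N-1)*r + 2*r = (N+1)*r := by
        have h : N - 1 + 2 = N + 1 := by omega
        calc (N-1)*r + 2*r = (N-1+2)*r := by rw [Nat.add_mul]
        _ = (N+1)*r := by rw [h]
      omega
    · have heq : monomial (y1 + y2) (1:k) = monomial y1 1 * monomial y2 1 := by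
        rw [monomial_mul, one_mul]
      have hpow : J ^ t * J ^ c = J ^ r := by
        rw [← pow_add]
        congr 1
        omega
      rw [heq, ← hpow]
      exact Ideal.mul_mem_mul hmem1 hmem2

end Stmt19Aux

/-- Let `N ≥ 2` and `1 ≤ n ≤ N + 1`, and let `e₁, …, eₙ` be the first `n`
fundamental points of `ℙᴺ`. Then the radical ideal `I = ⋂ⱼ m_{eⱼ}` satisfies
`I^(Nr) ⊆ M^((N-1)r) * I^r` for all `r ≥ 1`. -/
theorem statement19 (k : Type*) [Field k] [CharZero k] (N n : ℕ)
    (hN : 2 ≤ N) (hn1 : 1 ≤ n) (hn2 : n ≤ N + 1)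
    (e : Fin n → (Fin (N + 1) → k))
    (he : ∀ j, e j = Pi.single (Fin.castLE hn2 j) 1) :
    ∀ r : ℕ, 1 ≤ r →
      fatIdeal e (fun _ => N * r) ≤
        maxIdeal k N ^ ((N - 1) * r) * (fatIdeal e (fun _ => 1)) ^ r := by
  intro r hr f hf
  classical
  have hsupp : ∀ x ∈ f.support, ∀ l : Fin (N + 1), (l : ℕ) < n → N * r + x l ≤ ∑ i, x i := by
    intro x hx l hl
    have hfj : f ∈ pointIdeal (e ⟨(l : ℕ), hl⟩) ^ (N * r) := by
      rw [fatIdeal] at hf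
      exact (Submodule.mem_iInf _).mp hf ⟨(l : ℕ), hl⟩
    rw [he ⟨(l : ℕ), hl⟩] at hfj
    have hcast : Fin.castLE hn2 (⟨(l : ℕ), hl⟩ : Fin n) = l := by
      apply Fin.ext
      rfl
    rw [hcast] at hfj
    exact Stmt19Aux.mem_pow_single_support hfj x hx
  have hI1 : ∀ l : Fin (N + 1), n ≤ (l : ℕ) → X l ∈ fatIdeal e (fun _ => 1) := by
    intro l hl
    rw [fatIdeal]
    rw [Submodule.mem_iInf]
    intro j
    rw [pow_one, he j]
    apply Stmt19Aux.X_mem_pointIdeal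
    intro hcon
    have hval : (l : ℕ) = (j : ℕ) := by rw [hcon]; rfl
    have := j.isLt
    omega
  have hI2 : ∀ a bb : Fin (N + 1), a ≠ bb →
      (X a * X bb : MvPolynomial (Fin (N + 1)) k) ∈ fatIdeal e (fun _ => 1) := by
    intro a bb hab
    rw [fatIdeal, Submodule.mem_iInf]
    intro j
    rw [pow_one, he j]
    rcases eq_or_ne a (Fin.castLE hn2 j) with rfl | hne
    · exact Ideal.mul_mem_left _ _ (Stmt19Aux.X_mem_pointIdeal (Ne.symm hab))
    · exact Ideal.mul_mem_right _ _ (Stmt19Aux.X_mem_pointIdeal hne)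
  rw [as_sum f]
  apply Ideal.sum_mem
  intro x hx
  obtain ⟨y, hy, hbound, hymem⟩ := Stmt19Aux.extract hN hn1 hn2 (fatIdeal e fun _ => 1)
    hI1 hI2 r hr x (hsupp x hx)
  have h1 : monomial x (coeff x f) = C (coeff x f) * monomial x (1 : k) := by
    rw [C_mul_monomial, mul_one]
  rw [h1]
  apply Ideal.mul_mem_left
  rw [Stmt19Aux.monomial_split x y hy]
  have hM : monomial (x - y) (1 : k) ∈ maxIdeal k N ^ ((N - 1) * r) := by
    rw [maxIdeal]
    apply Stmt19Aux.monomial_mem_span_range_X_pow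
    have := Stmt19Aux.sum_sub_add x y hy
    omega
  exact Ideal.mul_mem_mul hM hymem
end
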